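/- arXiv:0903.2699 — 3 statements merged into one kernel-verified Lean document; each statement's English description precedes it below -/
import Mathlib

section
/- Let N be a positive integer and let (μ_n)_{n≥1} be a strictly increasing sequence of positive real numbers such that |μ_n − (N + 1/2)| < 1/10 for 1 ≤ n ≤ N and μ_n = n for n ≥ N + 1. Then the infinite product s(μ) = π ∏_{n=1}^∞ (μ_n² − μ²)/n², which equals (sin(πμ)/μ) · ∏_{n=1}^N (μ_n² − μ²)/(n² − μ²), defines an entire function of μ; all zeros of s are simple, and (−1)^n s'(μ_n) > 0 for every n ≥ 1. -/
open Real Set Topology Filter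

namespace Stmt6Aux

noncomputable def fct (μ : ℕ → ℝ) (n : ℕ) (z : ℂ) : ℂ := ((μ n : ℂ) ^ 2 - z ^ 2) / (n : ℂ) ^ 2
noncomputable def PP (μ : ℕ → ℝ) (m : ℕ) (z : ℂ) : ℂ := (π : ℂ) * ∏ n ∈ Finset.Icc 1 m, fct μ n z
noncomputable def sfun (μ : ℕ → ℝ) (z : ℂ) : ℂ := limUnder Filter.atTop (fun m => PP μ m z)
noncomputable def gfun (z : ℂ) : ℂ := if z = 0 then (π : ℂ) else Complex.sin ((π : ℂ) * z) / z
noncomputable def Ac (μ : ℕ → ℝ) (N : ℕ) (z : ℂ) : ℂ := ∏ n ∈ Finset.Icc 1 N, ((μ n : ℂ) ^ 2 - z ^ 2)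
noncomputable def Qc (N : ℕ) (z : ℂ) : ℂ := ∏ n ∈ Finset.Icc 1 N, ((n : ℂ) ^ 2 - z ^ 2)

section
variable {N : ℕ} {μ : ℕ → ℝ} {R : ℝ}


lemma sum_inv_sq_le {a : ℕ} (ha : 1 ≤ a) (b : ℕ) :
    ∑ n ∈ Finset.Ioc a b, (1 : ℝ) / (n : ℝ) ^ 2 ≤ 1 / a := by
  rcases le_or_gt a b with hab | hab
  · have key : ∀ c : ℕ, a ≤ c → ∑ n ∈ Finset.Ioc a c, (1 : ℝ) / (n : ℝ) ^ 2 ≤ 1 / a - 1 / c := by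
      intro c hc
      induction c, hc using Nat.le_induction with
      | base => simp
      | succ c hc ih =>
        rw [Finset.sum_Ioc_succ_top (by omega : a ≤ c)]
        have hc0 : (0 : ℝ) < (c : ℝ) := by exact_mod_cast (by omega : 0 < c)
        have h1 : (1 : ℝ) / ((c : ℝ) + 1) ^ 2 ≤ 1 / c - 1 / (c + 1) := by
          rw [div_sub_div _ _ (ne_of_gt hc0) (by positivity)]
          rw [div_le_div_iff₀ (by positivity) (by positivity)]
          ring_nf
          nlinarith [hc0]
        have := ih
        push_cast
        push_cast at this h1
        linarith
    have := key b hab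
    have hb0 : (0 : ℝ) < (b : ℝ) := by exact_mod_cast (by omega : 0 < b)
    have : (0:ℝ) ≤ 1 / b := by positivity
    linarith [key b hab]
  · rw [Finset.Ioc_eq_empty (by omega)]
    simp


lemma norm_fct_le_small (hb : ∀ k, 1 ≤ k → k ≤ N → |μ k| ≤ N + 1)
    {z : ℂ} (hz : ‖z‖ ≤ R) {n : ℕ} (h1 : 1 ≤ n) (h2 : n ≤ N) :
    ‖fct μ n z‖ ≤ ((N : ℝ) + 1) ^ 2 + R ^ 2 + 1 := by
  have hR : 0 ≤ R := le_trans (norm_nonneg z) hz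
  have hn1 : (1 : ℝ) ≤ ‖((n : ℕ) : ℂ) ^ 2‖ := by
    rw [norm_pow, Complex.norm_natCast]
    have : (1 : ℝ) ≤ (n : ℝ) := by exact_mod_cast h1
    nlinarith
  have hnum : ‖((μ n : ℂ)) ^ 2 - z ^ 2‖ ≤ ((N : ℝ) + 1) ^ 2 + R ^ 2 := by
    refine le_trans (norm_sub_le _ _) ?_
    rw [norm_pow, norm_pow, Complex.norm_real, Real.norm_eq_abs]
    have h3 := hb n h1 h2
    have h4 : |μ n| ^ 2 ≤ ((N : ℝ) + 1) ^ 2 := by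
      apply pow_le_pow_left₀ (abs_nonneg _) h3
    have h5 : ‖z‖ ^ 2 ≤ R ^ 2 := by apply pow_le_pow_left₀ (norm_nonneg _) hz
    linarith
  calc ‖fct μ n z‖ = ‖((μ n : ℂ)) ^ 2 - z ^ 2‖ / ‖((n : ℕ) : ℂ) ^ 2‖ := by
        rw [fct, norm_div]
    _ ≤ (((N : ℝ) + 1) ^ 2 + R ^ 2) / 1 := by
        apply div_le_div₀ (by positivity) hnum one_pos hn1
    _ ≤ ((N : ℝ) + 1) ^ 2 + R ^ 2 + 1 := by rw [div_one]; linarith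


lemma fct_tail (htail : ∀ k, N + 1 ≤ k → μ k = k) {n : ℕ} (hn : N + 1 ≤ n) (z : ℂ) :
    fct μ n z = 1 - z ^ 2 / (n : ℂ) ^ 2 := by
  have hn0 : ((n : ℕ) : ℂ) ≠ 0 := by exact_mod_cast Nat.cast_ne_zero.mpr (by omega)
  rw [fct, htail n hn]
  push_cast
  field_simp


lemma norm_fct_le_tail (htail : ∀ k, N + 1 ≤ k → μ k = k)
    {z : ℂ} (hz : ‖z‖ ≤ R) {n : ℕ} (hn : N + 1 ≤ n) :
    ‖fct μ n z‖ ≤ Real.exp (R ^ 2 / (n : ℝ) ^ 2) := by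
  have hR : 0 ≤ R := le_trans (norm_nonneg z) hz
  have hn0 : (0 : ℝ) < (n : ℝ) := by exact_mod_cast (by omega : 0 < n)
  rw [fct_tail htail hn]
  refine le_trans (norm_sub_le _ _) ?_
  rw [norm_one, norm_div, norm_pow, norm_pow, Complex.norm_natCast]
  have h5 : ‖z‖ ^ 2 / (n:ℝ) ^ 2 ≤ R ^ 2 / (n:ℝ) ^ 2 := by
    apply div_le_div_of_nonneg_right (pow_le_pow_left₀ (norm_nonneg _) hz 2) (by positivity)
  have h6 := Real.add_one_le_exp (R ^ 2 / (n:ℝ) ^ 2)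
  linarith


lemma norm_prod_fct_le (hN : 1 ≤ N) (hb : ∀ k, 1 ≤ k → k ≤ N → |μ k| ≤ N + 1)
    (htail : ∀ k, N + 1 ≤ k → μ k = k) {z : ℂ} (hz : ‖z‖ ≤ R) (m : ℕ) :
    ∏ n ∈ Finset.Icc 1 m, ‖fct μ n z‖ ≤ (((N : ℝ) + 1) ^ 2 + R ^ 2 + 1) ^ N * Real.exp (R ^ 2) := by
  have hR : 0 ≤ R := le_trans (norm_nonneg z) hz
  set C : ℝ := ((N : ℝ) + 1) ^ 2 + R ^ 2 + 1 with hC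
  have hC1 : (1 : ℝ) ≤ C := by nlinarith [sq_nonneg ((N:ℝ)+1), sq_nonneg R]
  have hIcc : Finset.Icc 1 m = Finset.Ioc 0 m := Finset.Icc_add_one_left_eq_Ioc 0 m
  rw [hIcc]
  have hfirst : ∀ b : ℕ, b ≤ N → ∏ n ∈ Finset.Ioc 0 b, ‖fct μ n z‖ ≤ C ^ N := by
    intro b hbN
    calc ∏ n ∈ Finset.Ioc 0 b, ‖fct μ n z‖ ≤ C ^ (Finset.Ioc 0 b).card := by
          rw [← Finset.prod_const]
          apply Finset.prod_le_prod (fun _ _ => norm_nonneg _)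
          intro x hx
          rw [Finset.mem_Ioc] at hx
          exact norm_fct_le_small hb hz hx.1 (le_trans hx.2 hbN)
      _ ≤ C ^ N := by
          rw [Nat.card_Ioc]
          exact pow_le_pow_right₀ hC1 (by omega)
  rcases le_or_gt m N with hm | hm
  · calc ∏ n ∈ Finset.Ioc 0 m, ‖fct μ n z‖ ≤ C ^ N := hfirst m hm
      _ ≤ C ^ N * Real.exp (R ^ 2) :=
          le_mul_of_one_le_right (by positivity) (Real.one_le_exp (by positivity))
  · rw [← Finset.prod_Ioc_consecutive _ (Nat.zero_le N) (le_of_lt hm)]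
    have htailprod : ∏ n ∈ Finset.Ioc N m, ‖fct μ n z‖ ≤ Real.exp (R ^ 2) := by
      calc ∏ n ∈ Finset.Ioc N m, ‖fct μ n z‖
          ≤ ∏ n ∈ Finset.Ioc N m, Real.exp (R ^ 2 / (n : ℝ) ^ 2) := by
            apply Finset.prod_le_prod (fun _ _ => norm_nonneg _)
            intro i hi
            rw [Finset.mem_Ioc] at hi
            exact norm_fct_le_tail htail hz (by omega)
        _ = Real.exp (∑ n ∈ Finset.Ioc N m, R ^ 2 / (n : ℝ) ^ 2) := (Real.exp_sum _ _).symm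
        _ ≤ Real.exp (R ^ 2) := by
            apply Real.exp_le_exp.mpr
            have h1 : ∑ n ∈ Finset.Ioc N m, R ^ 2 / (n : ℝ) ^ 2
                = R ^ 2 * ∑ n ∈ Finset.Ioc N m, (1:ℝ) / (n : ℝ) ^ 2 := by
              rw [Finset.mul_sum]
              apply Finset.sum_congr rfl
              intro i _
              ring
            rw [h1]
            have h2 := sum_inv_sq_le hN m
            have h3 : (1:ℝ) / N ≤ 1 := by
              apply div_le_one_of_le₀
              · exact_mod_cast hN
              · positivity
            nlinarith [sq_nonneg R, Finset.sum_nonneg (fun (i:ℕ) _hi =>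
                by positivity : ∀ i ∈ Finset.Ioc N m, (0:ℝ) ≤ (1:ℝ)/(i:ℝ)^2)]
    have h4 : (0:ℝ) ≤ ∏ n ∈ Finset.Ioc 0 N, ‖fct μ n z‖ :=
      Finset.prod_nonneg fun _ _ => norm_nonneg _
    calc (∏ n ∈ Finset.Ioc 0 N, ‖fct μ n z‖) * ∏ n ∈ Finset.Ioc N m, ‖fct μ n z‖
        ≤ C ^ N * Real.exp (R ^ 2) := by
          apply mul_le_mul (hfirst N le_rfl) htailprod
            (Finset.prod_nonneg fun _ _ => norm_nonneg _) (by positivity)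


lemma norm_PP_le (hN : 1 ≤ N) (hb : ∀ k, 1 ≤ k → k ≤ N → |μ k| ≤ N + 1)
    (htail : ∀ k, N + 1 ≤ k → μ k = k) {z : ℂ} (hz : ‖z‖ ≤ R) (m : ℕ) :
    ‖PP μ m z‖ ≤ π * ((((N : ℝ) + 1) ^ 2 + R ^ 2 + 1) ^ N * Real.exp (R ^ 2)) := by
  rw [PP, norm_mul, Complex.norm_real, Real.norm_eq_abs, abs_of_pos pi_pos, norm_prod]
  exact mul_le_mul_of_nonneg_left (norm_prod_fct_le hN hb htail hz m) pi_pos.le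


lemma PP_diff_le (hN : 1 ≤ N) (hb : ∀ k, 1 ≤ k → k ≤ N → |μ k| ≤ N + 1)
    (htail : ∀ k, N + 1 ≤ k → μ k = k) {z : ℂ} (hz : ‖z‖ ≤ R) {m : ℕ} (hm : N ≤ m) :
    ∀ m', m ≤ m' → ‖PP μ m' z - PP μ m z‖ ≤
      π * ((((N : ℝ) + 1) ^ 2 + R ^ 2 + 1) ^ N * Real.exp (R ^ 2)) *
        ∑ n ∈ Finset.Ioc m m', R ^ 2 / (n : ℝ) ^ 2 := by
  have hR : 0 ≤ R := le_trans (norm_nonneg z) hz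
  set B : ℝ := π * ((((N : ℝ) + 1) ^ 2 + R ^ 2 + 1) ^ N * Real.exp (R ^ 2)) with hB
  have hB0 : 0 ≤ B := by positivity
  intro m' hm'
  induction m', hm' using Nat.le_induction with
  | base => simp
  | succ c hc ih =>
    have hPP : PP μ (c + 1) z = PP μ c z * fct μ (c+1) z := by
      rw [PP, PP, Finset.prod_Icc_succ_top (by omega : 1 ≤ c + 1)]
      ring
    have hfct : fct μ (c+1) z - 1 = -(z ^ 2 / ((c+1 : ℕ) : ℂ) ^ 2) := by
      rw [fct_tail htail (by omega : N + 1 ≤ c + 1) z]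
      ring
    have hc0 : (0:ℝ) < ((c:ℝ)+1)^2 := by positivity
    have hnorm : ‖fct μ (c+1) z - 1‖ ≤ R ^ 2 / ((c+1:ℕ) : ℝ) ^ 2 := by
      rw [hfct, norm_neg, norm_div, norm_pow, norm_pow, Complex.norm_natCast]
      apply div_le_div_of_nonneg_right (pow_le_pow_left₀ (norm_nonneg _) hz 2)
      push_cast
      exact hc0.le
    calc ‖PP μ (c+1) z - PP μ m z‖
        = ‖PP μ c z * (fct μ (c+1) z - 1) + (PP μ c z - PP μ m z)‖ := by
          rw [hPP]; ring_nf
      _ ≤ ‖PP μ c z * (fct μ (c+1) z - 1)‖ + ‖PP μ c z - PP μ m z‖ := norm_add_le _ _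
      _ ≤ B * (R ^ 2 / ((c+1:ℕ) : ℝ) ^ 2) + B * ∑ n ∈ Finset.Ioc m c, R ^ 2 / (n : ℝ) ^ 2 := by
          gcongr
          · rw [norm_mul]
            apply mul_le_mul (norm_PP_le hN hb htail hz c) hnorm (norm_nonneg _) hB0
      _ = B * ∑ n ∈ Finset.Ioc m (c+1), R ^ 2 / (n : ℝ) ^ 2 := by
          rw [Finset.sum_Ioc_succ_top (by omega : m ≤ c)]
          ring


lemma PP_ucauchy (hN : 1 ≤ N) (hb : ∀ k, 1 ≤ k → k ≤ N → |μ k| ≤ N + 1)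
    (htail : ∀ k, N + 1 ≤ k → μ k = k) (R : ℝ) :
    UniformCauchySeqOn (PP μ) Filter.atTop (Metric.closedBall (0:ℂ) R) := by
  rw [Metric.uniformCauchySeqOn_iff]
  intro ε hε
  set B : ℝ := π * ((((N : ℝ) + 1) ^ 2 + R ^ 2 + 1) ^ N * Real.exp (R ^ 2)) * R ^ 2 with hB
  have hB0 : 0 ≤ B := by positivity
  obtain ⟨M₀, hM₀⟩ := exists_nat_gt (B / ε)
  set M : ℕ := max (N + 1) M₀ with hM
  refine ⟨M, fun m hm m' hm' x hx => ?_⟩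
  rw [Metric.mem_closedBall, Complex.dist_eq, sub_zero] at hx
  -- wlog m ≤ m'
  have key : ∀ p q : ℕ, M ≤ p → p ≤ q → dist (PP μ p x) (PP μ q x) < ε := by
    intro p q hp hpq
    rw [dist_eq_norm, ← norm_neg, neg_sub]
    have hNp : N ≤ p := by omega
    have h1 := PP_diff_le hN hb htail hx hNp q hpq
    have hsum : ∑ n ∈ Finset.Ioc p q, R ^ 2 / (n : ℝ) ^ 2 ≤ R ^ 2 * (1 / p) := by
      have h2 : ∑ n ∈ Finset.Ioc p q, R ^ 2 / (n : ℝ) ^ 2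
          = R ^ 2 * ∑ n ∈ Finset.Ioc p q, (1:ℝ) / (n : ℝ) ^ 2 := by
        rw [Finset.mul_sum]; exact Finset.sum_congr rfl fun i _ => by ring
      rw [h2]
      exact mul_le_mul_of_nonneg_left (sum_inv_sq_le (by omega) q) (by positivity)
    have hp0 : (0:ℝ) < (p:ℝ) := by exact_mod_cast (by omega : 0 < p)
    have h3 : ‖PP μ q x - PP μ p x‖ ≤ B * (1/p) := by
      refine le_trans h1 ?_
      have h4 := mul_le_mul_of_nonneg_left hsum
        (by positivity : (0:ℝ) ≤ π * ((((N : ℝ) + 1) ^ 2 + R ^ 2 + 1) ^ N * Real.exp (R ^ 2)))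
      refine le_trans h4 (le_of_eq ?_)
      rw [hB]; ring
    refine lt_of_le_of_lt h3 ?_
    have hpM : (B/ε) < (p:ℝ) := lt_of_lt_of_le hM₀ (by exact_mod_cast le_trans (le_max_right _ _) hp)
    rw [mul_one_div, div_lt_iff₀ hp0]
    calc B = (B/ε) * ε := by field_simp
      _ < (p:ℝ) * ε := by
          apply mul_lt_mul_of_pos_right hpM hε
      _ = ε * p := by ring
  rcases le_total m m' with h | h
  · exact key m m' hm h
  · rw [dist_comm]; exact key m' m hm' h


lemma differentiable_finprod (u : Finset ℕ) (f : ℕ → ℂ → ℂ)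
    (hf : ∀ n ∈ u, Differentiable ℂ (f n)) :
    Differentiable ℂ (fun z => ∏ n ∈ u, f n z) := by
  classical
  induction u using Finset.induction_on with
  | empty => simpa using differentiable_const (1:ℂ)
  | @insert a u ha ih =>
    have : (fun z => ∏ n ∈ insert a u, f n z) = fun z => f a z * ∏ n ∈ u, f n z := by
      funext z; rw [Finset.prod_insert ha]
    rw [this]
    exact (hf a (Finset.mem_insert_self a u)).mul (ih fun n hn => hf n (Finset.mem_insert_of_mem hn))


lemma PP_differentiable (m : ℕ) : Differentiable ℂ (PP μ m) := by
  have : PP μ m = fun z => (π : ℂ) * ∏ n ∈ Finset.Icc 1 m, fct μ n z := rfl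
  rw [this]
  apply Differentiable.const_mul
  apply differentiable_finprod
  intro n _
  exact ((differentiable_const _).sub (differentiable_pow 2)).div_const _


lemma prod_shift (f : ℕ → ℂ) (m : ℕ) :
    ∏ j ∈ Finset.range m, f (j + 1) = ∏ n ∈ Finset.Icc 1 m, f n := by
  rw [← Finset.Ico_add_one_right_eq_Icc, Finset.prod_Ico_eq_prod_range, Nat.add_sub_cancel]
  exact Finset.prod_congr rfl fun j _ => by rw [add_comm]


lemma PP_split (htail : ∀ k, N + 1 ≤ k → μ k = k) {z : ℂ}
    (hz : ∀ n : ℕ, 1 ≤ n → n ≤ N → ((n : ℂ) ^ 2 - z ^ 2) ≠ 0) {m : ℕ} (hm : N ≤ m) :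
    PP μ m z = (∏ n ∈ Finset.Icc 1 N, (((μ n : ℂ)) ^ 2 - z ^ 2) / ((n : ℂ) ^ 2 - z ^ 2)) *
      ((π : ℂ) * ∏ n ∈ Finset.Icc 1 m, ((n : ℂ) ^ 2 - z ^ 2) / (n : ℂ) ^ 2) := by
  have key : ∀ u : Finset ℕ, (∀ n ∈ u, 1 ≤ n) →
      (∀ n ∈ u, n ≤ N) → ∏ n ∈ u, fct μ n z =
        (∏ n ∈ u, (((μ n : ℂ)) ^ 2 - z ^ 2) / ((n : ℂ) ^ 2 - z ^ 2)) *
          ∏ n ∈ u, ((n : ℂ) ^ 2 - z ^ 2) / (n : ℂ) ^ 2 := by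
    intro u h1 h2
    rw [← Finset.prod_mul_distrib]
    refine Finset.prod_congr rfl fun n hn => ?_
    have hn0 : ((n : ℕ) : ℂ) ≠ 0 := Nat.cast_ne_zero.mpr (by have := h1 n hn; omega)
    have hnz := hz n (h1 n hn) (h2 n hn)
    rw [fct]
    field_simp
  have htl : ∀ n ∈ Finset.Ioc N m, fct μ n z = ((n : ℂ) ^ 2 - z ^ 2) / (n : ℂ) ^ 2 := by
    intro n hn
    rw [Finset.mem_Ioc] at hn
    have hn0 : ((n : ℕ) : ℂ) ≠ 0 := Nat.cast_ne_zero.mpr (by omega)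
    rw [fct_tail htail (by omega) z]
    field_simp
  have hIcc : ∀ k : ℕ, Finset.Icc 1 k = Finset.Ioc 0 k := fun k => Finset.Icc_add_one_left_eq_Ioc 0 k
  rw [PP]
  simp only [hIcc]
  rw [← Finset.prod_Ioc_consecutive _ (Nat.zero_le N) hm,
    ← Finset.prod_Ioc_consecutive (fun n => ((n : ℂ) ^ 2 - z ^ 2) / (n : ℂ) ^ 2) (Nat.zero_le N) hm,
    Finset.prod_congr rfl htl,
    key (Finset.Ioc 0 N) (fun n hn => (Finset.mem_Ioc.mp hn).1) (fun n hn => (Finset.mem_Ioc.mp hn).2)]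
  ring


lemma Qc_diff : Differentiable ℂ (Qc N) :=
  differentiable_finprod _ _ fun n _ => (differentiable_const _).sub (differentiable_pow 2)


lemma Ac_diff : Differentiable ℂ (Ac μ N) :=
  differentiable_finprod _ _ fun n _ => (differentiable_const _).sub (differentiable_pow 2)


lemma prodBc_diff (k : ℕ) :
    Differentiable ℂ (fun z => ∏ j ∈ (Finset.Icc 1 N).erase k, ((μ j : ℂ) ^ 2 - z ^ 2)) :=
  differentiable_finprod _ _ fun n _ => (differentiable_const _).sub (differentiable_pow 2)


lemma prodQe_diff (k : ℕ) :
    Differentiable ℂ (fun z : ℂ => ∏ j ∈ (Finset.Icc 1 N).erase k, ((j : ℂ) ^ 2 - z ^ 2)) :=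
  differentiable_finprod _ _ fun j _ => (differentiable_const _).sub (differentiable_pow 2)


lemma hyp_of_Qc_ne {z : ℂ} (hQ : Qc N z ≠ 0) :
    ∀ n : ℕ, 1 ≤ n → n ≤ N → z ^ 2 ≠ (n : ℂ) ^ 2 := by
  intro n h1 h2
  rw [Qc, Finset.prod_ne_zero_iff] at hQ
  have := hQ n (Finset.mem_Icc.mpr ⟨h1, h2⟩)
  exact fun h => this (by rw [h]; ring)


lemma hasDerivAt_sin_pi (c : ℂ) :
    HasDerivAt (fun z : ℂ => Complex.sin ((π : ℂ) * z)) ((π : ℂ) * Complex.cos ((π : ℂ) * c)) c := by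
  have h2 : HasDerivAt (fun z : ℂ => (π : ℂ) * z) ((π : ℂ)) c := by
    simpa using (hasDerivAt_id c).const_mul (π : ℂ)
  have h1 := (Complex.hasDerivAt_sin ((π : ℂ) * c)).comp c h2
  rw [mul_comm]
  exact h1


lemma hasDerivAt_fac (a c : ℂ) : HasDerivAt (fun z : ℂ => a ^ 2 - z ^ 2) (-2 * c) c := by
  have h1 : HasDerivAt (fun z : ℂ => z ^ 2) (2 * c) c := by simpa using hasDerivAt_pow 2 c
  simpa using h1.const_sub (a ^ 2)


lemma sin_pi_nat (m : ℕ) : Complex.sin ((π : ℂ) * m) = 0 := by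
  rw [mul_comm]
  exact_mod_cast Complex.sin_nat_mul_pi m


lemma cos_pi_nat (m : ℕ) : Complex.cos ((π : ℂ) * m) = ((-1 : ℝ) ^ m : ℝ) := by
  have h1 : Real.cos ((m : ℝ) * π - 0) = (-1) ^ m * Real.cos 0 := Real.cos_nat_mul_pi_sub 0 m
  simp only [sub_zero, Real.cos_zero, mul_one] at h1
  rw [mul_comm, show ((m : ℕ) : ℂ) * ((π : ℝ) : ℂ) = (((m : ℝ) * π : ℝ) : ℂ) by push_cast; ring,
    ← Complex.ofReal_cos, h1]


lemma neg_prod_sign (u : Finset ℕ) (f : ℕ → ℝ) (h : ∀ i ∈ u, f i < 0) :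
    0 < (-1 : ℝ) ^ u.card * ∏ i ∈ u, f i := by
  classical
  induction u using Finset.induction_on with
  | empty => simp
  | @insert a u ha ih =>
    have hfa := h a (Finset.mem_insert_self a u)
    have ih' := ih fun i hi => h i (Finset.mem_insert_of_mem hi)
    rw [Finset.card_insert_of_notMem ha, Finset.prod_insert ha]
    have heq : (-1 : ℝ) ^ (u.card + 1) * (f a * ∏ i ∈ u, f i)
        = (-f a) * ((-1 : ℝ) ^ u.card * ∏ i ∈ u, f i) := by
      rw [pow_succ]; ring
    rw [heq]
    exact mul_pos (neg_pos.mpr hfa) ih'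


lemma sin_sign {x : ℝ} (N : ℕ) (h1 : (N : ℝ) + 2/5 < x) (h2 : x < (N : ℝ) + 3/5) :
    0 < (-1 : ℝ) ^ N * Real.sin (π * x) := by
  have key : Real.sin (π * x) = (-1 : ℝ) ^ N * Real.sin (π * (x - N)) := by
    have h3 := Real.sin_antiperiodic.add_nat_mul_eq (x := π * (x - N)) N
    have h4 : π * (x - N) + (N : ℝ) * π = π * x := by ring
    rw [h4] at h3
    rw [h3]
  have hpos : 0 < Real.sin (π * (x - N)) := by
    apply Real.sin_pos_of_pos_of_lt_pi
    · have : (0:ℝ) < x - N := by linarith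
      positivity
    · have h5 : x - N < 1 := by linarith
      nlinarith [pi_pos]
  rw [key, ← mul_assoc, ← pow_add]
  rw [Even.neg_one_pow (Even.add_self N), one_mul]
  exact hpos


lemma hNN : ((-1 : ℝ)) ^ N * (-1 : ℝ) ^ N = 1 := by
  rw [← pow_add]
  exact Even.neg_one_pow (Even.add_self N)

-- (P1) sign at μ k


lemma sign_at_mu (hN : 1 ≤ N) (hpos : ∀ n : ℕ, 1 ≤ n → 0 < μ n)
    (hmono : ∀ m n : ℕ, 1 ≤ m → m < n → μ m < μ n)
    (hlo : ∀ k, 1 ≤ k → k ≤ N → (N : ℝ) + 2/5 < μ k)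
    (hhi : ∀ k, 1 ≤ k → k ≤ N → μ k < (N : ℝ) + 3/5)
    {k : ℕ} (hk1 : 1 ≤ k) (hkN : k ≤ N) :
    0 < (-1 : ℝ) ^ k * ((-2 * μ k) *
      (Real.sin (π * μ k) * (∏ j ∈ (Finset.Icc 1 N).erase k, ((μ j) ^ 2 - (μ k) ^ 2)) /
        (μ k * ∏ j ∈ Finset.Icc 1 N, ((j : ℝ) ^ 2 - (μ k) ^ 2)))) := by
  classical
  have hμk := hpos k hk1
  have hμklo := hlo k hk1 hkN
  have hμkhi := hhi k hk1 hkN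
  set S : ℝ := Real.sin (π * μ k) with hS
  set Br : ℝ := ∏ j ∈ (Finset.Icc 1 N).erase k, ((μ j) ^ 2 - (μ k) ^ 2) with hBr
  set Qr : ℝ := ∏ j ∈ Finset.Icc 1 N, ((j : ℝ) ^ 2 - (μ k) ^ 2) with hQr
  -- split the erase set
  have hsplit : (Finset.Icc 1 N).erase k = Finset.Icc 1 (k-1) ∪ Finset.Icc (k+1) N := by
    ext j
    simp only [Finset.mem_erase, Finset.mem_Icc, Finset.mem_union]
    omega
  have hdisj : Disjoint (Finset.Icc 1 (k-1)) (Finset.Icc (k+1) N) := by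
    rw [Finset.disjoint_left]
    intro j hj1 hj2
    rw [Finset.mem_Icc] at hj1 hj2
    omega
  set B1 : ℝ := ∏ j ∈ Finset.Icc 1 (k-1), ((μ j) ^ 2 - (μ k) ^ 2) with hB1
  set B2 : ℝ := ∏ j ∈ Finset.Icc (k+1) N, ((μ j) ^ 2 - (μ k) ^ 2) with hB2
  have hBr12 : Br = B1 * B2 := by rw [hBr, hsplit, Finset.prod_union hdisj]
  have hq1 : 0 < (-1 : ℝ) ^ N * S := sin_sign N hμklo hμkhi
  have hcard1 : (Finset.Icc 1 (k-1)).card = k - 1 := by rw [Nat.card_Icc]; omega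
  have hq2 : 0 < (-1 : ℝ) ^ (k-1) * B1 := by
    have h := neg_prod_sign (Finset.Icc 1 (k-1)) (fun j => (μ j) ^ 2 - (μ k) ^ 2) ?_
    · rwa [hcard1] at h
    · intro j hj
      rw [Finset.mem_Icc] at hj
      have h6 : μ j < μ k := hmono j k hj.1 (by omega)
      have h7 : 0 < μ j := hpos j hj.1
      show μ j ^ 2 - μ k ^ 2 < 0
      nlinarith
  have hq2' : 0 < B2 := by
    apply Finset.prod_pos
    intro j hj
    rw [Finset.mem_Icc] at hj
    have h6 : μ k < μ j := hmono k j hk1 (by omega)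
    nlinarith
  have hcard3 : (Finset.Icc 1 N).card = N := by rw [Nat.card_Icc]; omega
  have hq3 : 0 < (-1 : ℝ) ^ N * Qr := by
    have h := neg_prod_sign (Finset.Icc 1 N) (fun j => ((j:ℝ)) ^ 2 - (μ k) ^ 2) ?_
    · rwa [hcard3] at h
    · intro j hj
      rw [Finset.mem_Icc] at hj
      have h8 : (j : ℝ) ≤ (N : ℝ) := by exact_mod_cast hj.2
      have h9 : (0 : ℝ) < j := by exact_mod_cast (by omega : 0 < j)
      show _ - _ < (0:ℝ)
      nlinarith
  have hQrne : Qr ≠ 0 := by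
    intro h
    rw [h, mul_zero] at hq3
    exact lt_irrefl 0 hq3
  -- the key positive quantity
  have hX : 0 < (-1 : ℝ) ^ (k-1) * S * Br * Qr := by
    have hP : 0 < ((-1 : ℝ) ^ N * S) * (((-1 : ℝ) ^ (k-1) * B1) * B2) * ((-1 : ℝ) ^ N * Qr) :=
      mul_pos (mul_pos hq1 (mul_pos hq2 hq2')) hq3
    have heq2 : ((-1 : ℝ) ^ N * S) * (((-1 : ℝ) ^ (k-1) * B1) * B2) * ((-1 : ℝ) ^ N * Qr)
        = ((-1 : ℝ) ^ N * (-1 : ℝ) ^ N) * ((-1 : ℝ) ^ (k-1) * S * (B1 * B2) * Qr) := by ring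
    rw [heq2, hNN, one_mul, ← hBr12] at hP
    exact hP
  have hkpow : ((-1 : ℝ)) ^ k = -(-1 : ℝ) ^ (k-1) := by
    conv_lhs => rw [show k = (k-1)+1 by omega]
    rw [pow_succ]
    ring
  have hgoal : (-1 : ℝ) ^ k * ((-2 * μ k) * (S * Br / (μ k * Qr)))
      = 2 * ((-1 : ℝ) ^ (k-1) * S * Br * Qr) / Qr ^ 2 := by
    rw [hkpow]
    field_simp
  rw [hgoal]
  positivity

-- (P2) sign at integer m > N


lemma sign_at_int (hN : 1 ≤ N)
    (hhi : ∀ k, 1 ≤ k → k ≤ N → μ k < (N : ℝ) + 3/5)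
    (hpos : ∀ n : ℕ, 1 ≤ n → 0 < μ n)
    {m : ℕ} (hm : N + 1 ≤ m) :
    0 < (-1 : ℝ) ^ m * (π * (-1 : ℝ) ^ m *
      ((∏ j ∈ Finset.Icc 1 N, ((μ j) ^ 2 - (m : ℝ) ^ 2)) /
        ((m : ℝ) * ∏ j ∈ Finset.Icc 1 N, ((j : ℝ) ^ 2 - (m : ℝ) ^ 2)))) := by
  classical
  set Ar : ℝ := ∏ j ∈ Finset.Icc 1 N, ((μ j) ^ 2 - (m : ℝ) ^ 2) with hAr
  set Qr : ℝ := ∏ j ∈ Finset.Icc 1 N, ((j : ℝ) ^ 2 - (m : ℝ) ^ 2) with hQr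
  have hm' : (N : ℝ) + 1 ≤ (m : ℝ) := by exact_mod_cast hm
  have hcard : (Finset.Icc 1 N).card = N := by rw [Nat.card_Icc]; omega
  have hq1 : 0 < (-1 : ℝ) ^ N * Ar := by
    have h := neg_prod_sign (Finset.Icc 1 N) (fun j => (μ j) ^ 2 - ((m:ℝ)) ^ 2) ?_
    · rwa [hcard] at h
    · intro j hj
      rw [Finset.mem_Icc] at hj
      have h1 := hhi j hj.1 hj.2
      have h2 := hpos j hj.1
      show μ j ^ 2 - ((m:ℝ)) ^ 2 < 0
      nlinarith
  have hq2 : 0 < (-1 : ℝ) ^ N * Qr := by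
    have h := neg_prod_sign (Finset.Icc 1 N) (fun j => ((j:ℝ)) ^ 2 - ((m:ℝ)) ^ 2) ?_
    · rwa [hcard] at h
    · intro j hj
      rw [Finset.mem_Icc] at hj
      have h8 : (j : ℝ) ≤ (N : ℝ) := by exact_mod_cast hj.2
      have h9 : (0 : ℝ) < j := by exact_mod_cast (by omega : 0 < j)
      show _ - _ < (0:ℝ)
      nlinarith
  have hQrne : Qr ≠ 0 := by
    intro h
    rw [h, mul_zero] at hq2
    exact lt_irrefl 0 hq2
  have hAQ : 0 < Ar * Qr := by
    have := mul_pos hq1 hq2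
    have heq2 : ((-1 : ℝ) ^ N * Ar) * ((-1 : ℝ) ^ N * Qr)
        = ((-1 : ℝ) ^ N * (-1 : ℝ) ^ N) * (Ar * Qr) := by ring
    rw [heq2, hNN, one_mul] at this
    exact this
  have hm0 : (0 : ℝ) < (m : ℝ) := by exact_mod_cast (by omega : 0 < m)
  have hgoal : (-1 : ℝ) ^ m * (π * (-1 : ℝ) ^ m * (Ar / ((m : ℝ) * Qr)))
      = ((-1 : ℝ) ^ m * (-1 : ℝ) ^ m) * (π * (Ar * Qr) / ((m : ℝ) * Qr ^ 2)) := by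
    field_simp
  rw [hgoal, hNN (N := m), one_mul]
  positivity


lemma Qc_real (N : ℕ) (x : ℝ) :
    Qc N ((x : ℝ) : ℂ) = ((∏ j ∈ Finset.Icc 1 N, ((j : ℝ) ^ 2 - x ^ 2) : ℝ) : ℂ) := by
  rw [Qc, Complex.ofReal_prod]
  exact Finset.prod_congr rfl fun j _ => by push_cast; ring


lemma Ac_real (μ : ℕ → ℝ) (N : ℕ) (x : ℝ) :
    Ac μ N ((x : ℝ) : ℂ) = ((∏ j ∈ Finset.Icc 1 N, ((μ j) ^ 2 - x ^ 2) : ℝ) : ℂ) := by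
  rw [Ac, Complex.ofReal_prod]
  exact Finset.prod_congr rfl fun j _ => by push_cast; ring


lemma Br_real (μ : ℕ → ℝ) (N k : ℕ) (x : ℝ) :
    (∏ j ∈ (Finset.Icc 1 N).erase k, ((μ j : ℂ) ^ 2 - ((x : ℝ) : ℂ) ^ 2)) =
      ((∏ j ∈ (Finset.Icc 1 N).erase k, ((μ j) ^ 2 - x ^ 2) : ℝ) : ℂ) := by
  rw [Complex.ofReal_prod]
  exact Finset.prod_congr rfl fun j _ => by push_cast; ring


lemma Qc_even (N : ℕ) (w : ℂ) : Qc N (-w) = Qc N w := by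
  simp only [Qc, neg_sq]


lemma sin_pi_ofReal (x : ℝ) :
    Complex.sin ((π : ℂ) * ((x : ℝ) : ℂ)) = ((Real.sin (π * x) : ℝ) : ℂ) := by
  rw [Complex.ofReal_sin]
  norm_cast


lemma deriv_sfun_neg (heven : ∀ z, sfun μ (-z) = sfun μ z) (c : ℂ) :
    deriv (sfun μ) (-c) = -deriv (sfun μ) c := by
  have h1 := deriv_comp_neg (f := sfun μ) (x := c)
  have h2 : (fun x => sfun μ (-x)) = sfun μ := funext heven
  rw [h2] at h1
  linear_combination h1


variable (hN : 1 ≤ N) (hb : ∀ k, 1 ≤ k → k ≤ N → |μ k| ≤ N + 1)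
    (htail : ∀ k, N + 1 ≤ k → μ k = k)
include hN hb htail


lemma PP_tendsto (z : ℂ) : Filter.Tendsto (fun m => PP μ m z) Filter.atTop (𝓝 (sfun μ z)) := by
  have h1 : CauchySeq (fun m => PP μ m z) :=
    (PP_ucauchy hN hb htail ‖z‖).cauchySeq (by simp [Metric.mem_closedBall, Complex.dist_eq])
  exact h1.tendsto_limUnder


lemma PP_tlu : TendstoLocallyUniformly (PP μ) (sfun μ) Filter.atTop := by
  rw [tendstoLocallyUniformly_iff_forall_isCompact]
  intro K hK
  obtain ⟨R, hKR⟩ := hK.isBounded.subset_closedBall 0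
  exact ((PP_ucauchy hN hb htail R).tendstoUniformlyOn_of_tendsto
    (fun x _ => PP_tendsto hN hb htail x)).mono hKR


lemma sfun_differentiable : Differentiable ℂ (sfun μ) := by
  have h1 := (PP_tlu hN hb htail (μ := μ)).tendstoLocallyUniformlyOn (s := Set.univ)
  have h2 := h1.differentiableOn
    (Filter.Eventually.of_forall fun m => (PP_differentiable m).differentiableOn) isOpen_univ
  rw [← differentiableOn_univ]
  exact h2


lemma sfun_eq {z : ℂ} (hz : ∀ n : ℕ, 1 ≤ n → n ≤ N → z ^ 2 ≠ (n : ℂ) ^ 2) :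
    sfun μ z = gfun z * ∏ n ∈ Finset.Icc 1 N, (((μ n : ℂ)) ^ 2 - z ^ 2) / ((n : ℂ) ^ 2 - z ^ 2) := by
  have hz' : ∀ n : ℕ, 1 ≤ n → n ≤ N → ((n : ℂ) ^ 2 - z ^ 2) ≠ 0 := fun n h1 h2 =>
    sub_ne_zero_of_ne (hz n h1 h2).symm
  set K : ℂ := ∏ n ∈ Finset.Icc 1 N, (((μ n : ℂ)) ^ 2 - z ^ 2) / ((n : ℂ) ^ 2 - z ^ 2) with hK
  by_cases h0 : z = 0
  · subst h0
    have hconst : ∀ m : ℕ, N ≤ m → PP μ m 0 = gfun 0 * K := by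
      intro m hm
      rw [PP_split htail hz' hm]
      have h1 : ∏ n ∈ Finset.Icc 1 m, ((n : ℂ) ^ 2 - (0:ℂ) ^ 2) / (n : ℂ) ^ 2 = 1 := by
        apply Finset.prod_eq_one
        intro n hn
        rw [Finset.mem_Icc] at hn
        have hn0 : ((n : ℕ) : ℂ) ≠ 0 := Nat.cast_ne_zero.mpr (by omega)
        field_simp; ring
      rw [h1, gfun, if_pos rfl]
      ring
    have h2 : Filter.Tendsto (fun m => PP μ m 0) Filter.atTop (𝓝 (gfun 0 * K)) := by
      apply Filter.Tendsto.congr' _ tendsto_const_nhds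
      filter_upwards [Filter.eventually_ge_atTop N] with m hm
      exact (hconst m hm).symm
    exact tendsto_nhds_unique (PP_tendsto hN hb htail 0) h2
  · have heuler := Complex.tendsto_euler_sin_prod z
    have hdiv := heuler.div_const z
    have hprodeq : ∀ m : ℕ, (π : ℂ) * z * (∏ j ∈ Finset.range m, ((1:ℂ) - z ^ 2 / ((j:ℂ) + 1) ^ 2)) / z
        = (π : ℂ) * ∏ n ∈ Finset.Icc 1 m, ((n : ℂ) ^ 2 - z ^ 2) / (n : ℂ) ^ 2 := by
      intro m
      have h3 : ∏ j ∈ Finset.range m, ((1:ℂ) - z ^ 2 / ((j:ℂ) + 1) ^ 2)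
          = ∏ n ∈ Finset.Icc 1 m, ((n : ℂ) ^ 2 - z ^ 2) / (n : ℂ) ^ 2 := by
        rw [← prod_shift (fun n => ((n : ℂ) ^ 2 - z ^ 2) / (n : ℂ) ^ 2) m]
        refine Finset.prod_congr rfl fun j _ => ?_
        have hj0 : ((j:ℂ) + 1) ≠ 0 := by
          have : ((j + 1 : ℕ) : ℂ) ≠ 0 := Nat.cast_ne_zero.mpr (by omega)
          push_cast at this
          exact this
        push_cast
        field_simp
      rw [h3, mul_right_comm]
      exact mul_div_cancel_right₀ _ h0
    rw [show (fun m : ℕ => (π : ℂ) * z * (∏ j ∈ Finset.range m, ((1:ℂ) - z ^ 2 / ((j:ℂ) + 1) ^ 2)) / z)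
        = fun m : ℕ => (π : ℂ) * ∏ n ∈ Finset.Icc 1 m, ((n : ℂ) ^ 2 - z ^ 2) / (n : ℂ) ^ 2
      from funext hprodeq] at hdiv
    have h4 : Filter.Tendsto (fun m => PP μ m z) Filter.atTop (𝓝 (K * (Complex.sin ((π:ℂ) * z) / z))) := by
      apply Filter.Tendsto.congr' _ (hdiv.const_mul K)
      filter_upwards [Filter.eventually_ge_atTop N] with m hm
      exact (PP_split htail hz' hm).symm
    have h5 := tendsto_nhds_unique (PP_tendsto hN hb htail z) h4
    rw [h5, gfun, if_neg h0]
    ring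


lemma sfun_even (z : ℂ) : sfun μ (-z) = sfun μ z := by
  have h1 : ∀ m, PP μ m (-z) = PP μ m z := by
    intro m
    simp only [PP, fct, neg_sq]
  exact tendsto_nhds_unique ((PP_tendsto hN hb htail (-z)).congr fun m => h1 m)
    (PP_tendsto hN hb htail z)


lemma sfun_eq' {z : ℂ} (hQ : Qc N z ≠ 0) (h0 : z ≠ 0) :
    sfun μ z = Complex.sin ((π : ℂ) * z) * Ac μ N z / (z * Qc N z) := by
  rw [sfun_eq hN hb htail (hyp_of_Qc_ne hQ), gfun, if_neg h0, Finset.prod_div_distrib, ← Ac, ← Qc,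
    div_mul_div_comm]

/-- the set where the product formula holds -/


lemma sfun_eventually_eq {c : ℂ} (hQ : Qc N c ≠ 0) (h0 : c ≠ 0) :
    sfun μ =ᶠ[𝓝 c] fun z => Complex.sin ((π : ℂ) * z) * Ac μ N z / (z * Qc N z) := by
  have hU : IsOpen {z : ℂ | Qc N z ≠ 0 ∧ z ≠ 0} := by
    have h1 : IsOpen {z : ℂ | Qc N z ≠ 0} := isOpen_compl_singleton.preimage Qc_diff.continuous
    exact h1.inter isOpen_compl_singleton
  have hc : c ∈ {z : ℂ | Qc N z ≠ 0 ∧ z ≠ 0} := ⟨hQ, h0⟩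
  filter_upwards [hU.mem_nhds hc] with z hz
  exact sfun_eq' hN hb htail hz.1 hz.2


lemma deriv_at_mu {k : ℕ} (hk1 : 1 ≤ k) (hQ : Qc N ((μ k : ℂ)) ≠ 0) (h0 : ((μ k : ℂ)) ≠ 0)
    (hkN : k ≤ N) :
    deriv (sfun μ) ((μ k : ℂ)) = (-2 * (μ k : ℂ)) *
      (Complex.sin ((π : ℂ) * (μ k : ℂ)) *
        (∏ j ∈ (Finset.Icc 1 N).erase k, ((μ j : ℂ) ^ 2 - (μ k : ℂ) ^ 2)) /
          ((μ k : ℂ) * Qc N ((μ k : ℂ)))) := by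
  set c : ℂ := (μ k : ℂ)
  set Bc : ℂ → ℂ := fun z => ∏ j ∈ (Finset.Icc 1 N).erase k, ((μ j : ℂ) ^ 2 - z ^ 2) with hBc
  set w : ℂ → ℂ := fun z => Complex.sin ((π : ℂ) * z) * Bc z / (z * Qc N z) with hw
  have hAc : ∀ z, Ac μ N z = ((μ k : ℂ) ^ 2 - z ^ 2) * Bc z := by
    intro z
    rw [Ac]
    exact (Finset.mul_prod_erase _ (fun j => ((μ j : ℂ) ^ 2 - z ^ 2))
      (Finset.mem_Icc.mpr ⟨hk1, hkN⟩)).symm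
  have hev : sfun μ =ᶠ[𝓝 c] fun z => ((μ k : ℂ) ^ 2 - z ^ 2) * w z := by
    filter_upwards [sfun_eventually_eq hN hb htail hQ h0] with z hz
    rw [hz, hAc z, hw]
    ring
  have hwd : DifferentiableAt ℂ w c := by
    apply DifferentiableAt.div
    · have hsin : Differentiable ℂ (fun z : ℂ => Complex.sin ((π : ℂ) * z)) :=
        Complex.differentiable_sin.comp (differentiable_id.const_mul (π : ℂ))
      exact (hsin.mul (prodBc_diff k)).differentiableAt
    · exact (differentiable_id.mul Qc_diff).differentiableAt
    · exact mul_ne_zero h0 hQ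
  have hfac : HasDerivAt (fun z : ℂ => (μ k : ℂ) ^ 2 - z ^ 2) (-2 * c) c := by
    have h1 : HasDerivAt (fun z : ℂ => z ^ 2) (2 * c) c := by
      simpa using hasDerivAt_pow 2 c
    simpa using h1.const_sub ((μ k : ℂ) ^ 2)
  have hprod : HasDerivAt (fun z => ((μ k : ℂ) ^ 2 - z ^ 2) * w z)
      ((-2 * c) * w c + ((μ k : ℂ) ^ 2 - c ^ 2) * deriv w c) c :=
    hfac.mul hwd.hasDerivAt
  have hzero : (μ k : ℂ) ^ 2 - c ^ 2 = 0 := by exact sub_self _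
  rw [hzero, zero_mul, add_zero] at hprod
  have hds : HasDerivAt (sfun μ) ((-2 * c) * w c) c := hprod.congr_of_eventuallyEq hev
  rw [hds.deriv]


lemma deriv_at_int {m : ℕ} (hm : N + 1 ≤ m) (hQ : Qc N ((m : ℕ) : ℂ) ≠ 0) :
    deriv (sfun μ) ((m : ℕ) : ℂ) =
      (π : ℂ) * Complex.cos ((π : ℂ) * m) * (Ac μ N m / (m * Qc N m)) := by
  set c : ℂ := ((m : ℕ) : ℂ)
  have h0 : c ≠ 0 := Nat.cast_ne_zero.mpr (by omega)
  set u : ℂ → ℂ := fun z => Ac μ N z / (z * Qc N z) with hu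
  have hev : sfun μ =ᶠ[𝓝 c] fun z => Complex.sin ((π : ℂ) * z) * u z := by
    filter_upwards [sfun_eventually_eq hN hb htail hQ h0] with z hz
    rw [hz, hu, mul_div_assoc]
  have hud : DifferentiableAt ℂ u c :=
    (Ac_diff.differentiableAt).div ((differentiable_id.mul Qc_diff).differentiableAt)
      (mul_ne_zero h0 hQ)
  have hprod : HasDerivAt (fun z => Complex.sin ((π : ℂ) * z) * u z)
      (((π : ℂ) * Complex.cos ((π : ℂ) * c)) * u c + Complex.sin ((π : ℂ) * c) * deriv u c) c :=
    (hasDerivAt_sin_pi c).mul hud.hasDerivAt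
  rw [show Complex.sin ((π : ℂ) * c) = 0 from sin_pi_nat m, zero_mul, add_zero] at hprod
  exact (hprod.congr_of_eventuallyEq hev).deriv


lemma sfun_ne_zero_at_small_int {n : ℕ} (hn1 : 1 ≤ n) (hnN : n ≤ N)
    (hA : Ac μ N ((n : ℕ) : ℂ) ≠ 0) : sfun μ ((n : ℕ) : ℂ) ≠ 0 := by
  classical
  set c : ℂ := ((n : ℕ) : ℂ) with hc
  have h0 : c ≠ 0 := Nat.cast_ne_zero.mpr (by omega)
  set Qe : ℂ → ℂ := fun z => ∏ j ∈ (Finset.Icc 1 N).erase n, ((j : ℂ) ^ 2 - z ^ 2) with hQe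
  set F₁ : ℂ → ℂ := fun z => sfun μ z * Qc N z with hF₁
  set F₂ : ℂ → ℂ := fun z => Complex.sin ((π : ℂ) * z) * (Ac μ N z / z) with hF₂
  have hn1' : (1 : ℝ) ≤ (n : ℝ) := by exact_mod_cast hn1
  -- punctured-ball equality
  have hpb : ∀ z : ℂ, z ∈ Metric.ball c (1/2) → z ≠ c → F₁ z = F₂ z := by
    intro z hzb hzc
    rw [Metric.mem_ball, dist_eq_norm] at hzb
    have hz0 : z ≠ 0 := by
      intro h
      rw [h] at hzb
      have h1 : ‖(0:ℂ) - c‖ = (n : ℝ) := by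
        rw [zero_sub, norm_neg, hc, Complex.norm_natCast]
      rw [h1] at hzb
      linarith
    have hQz : Qc N z ≠ 0 := by
      rw [Qc, Finset.prod_ne_zero_iff]
      intro j hj hzero
      rw [Finset.mem_Icc] at hj
      have hj1' : (1 : ℝ) ≤ (j : ℝ) := by exact_mod_cast hj.1
      have hfac : ((j:ℂ) - z) * ((j:ℂ) + z) = 0 := by rw [← hzero]; ring
      rcases mul_eq_zero.mp hfac with h | h
      · have hzj : z = (j:ℂ) := by linear_combination -h
        by_cases hjn : j = n
        · exact hzc (by rw [hzj, hjn])
        · rw [hzj] at hzb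
          have h2 : ‖(j:ℂ) - c‖ = |(j:ℝ) - (n:ℝ)| := by
            rw [show (j:ℂ) - c = (((j:ℝ) - (n:ℝ) : ℝ) : ℂ) by rw [hc]; push_cast; ring,
              Complex.norm_real, Real.norm_eq_abs]
          have h3 : (1:ℝ) ≤ |(j:ℝ) - (n:ℝ)| := by
            have h4 : ((1:ℤ)) ≤ |(j:ℤ) - (n:ℤ)| := Int.one_le_abs (by omega)
            calc (1:ℝ) ≤ ((|(j:ℤ) - (n:ℤ)| : ℤ) : ℝ) := by exact_mod_cast h4
              _ = |(j:ℝ) - (n:ℝ)| := by push_cast; rfl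
          rw [h2] at hzb
          linarith
      · have hzj : z = -(j:ℂ) := by linear_combination h
        rw [hzj] at hzb
        have h2 : ‖-(j:ℂ) - c‖ = (j:ℝ) + (n:ℝ) := by
          rw [show -(j:ℂ) - c = (((-((j:ℝ) + (n:ℝ))) : ℝ) : ℂ) by rw [hc]; push_cast; ring,
            Complex.norm_real, Real.norm_eq_abs, abs_neg, abs_of_pos (by linarith)]
        rw [h2] at hzb
        linarith
    have h4 := sfun_eq' hN hb htail hQz hz0
    show sfun μ z * Qc N z = Complex.sin ((π : ℂ) * z) * (Ac μ N z / z)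
    rw [h4]
    field_simp
  -- equality of the two functions near c
  have hQed : Differentiable ℂ Qe := prodQe_diff n
  have hF₁d : Differentiable ℂ F₁ := (sfun_differentiable hN hb htail).mul Qc_diff
  have hF₂d : DifferentiableAt ℂ F₂ c := by
    have hsin : Differentiable ℂ (fun z : ℂ => Complex.sin ((π : ℂ) * z)) :=
      Complex.differentiable_sin.comp (differentiable_id.const_mul (π : ℂ))
    exact (hsin.differentiableAt).mul ((Ac_diff.differentiableAt).div differentiableAt_id h0)
  have hEqP : F₁ =ᶠ[𝓝[≠] c] F₂ := by
    have hball : Metric.ball c (1/2) ∈ 𝓝[≠] c :=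
      mem_nhdsWithin_of_mem_nhds (Metric.ball_mem_nhds c (by norm_num))
    filter_upwards [hball, self_mem_nhdsWithin] with z hz1 hz2
    exact hpb z hz1 hz2
  have hcc : F₁ c = F₂ c := by
    have T₁ : Tendsto F₁ (𝓝[≠] c) (𝓝 (F₁ c)) :=
      (hF₁d.continuous.continuousAt.tendsto).mono_left nhdsWithin_le_nhds
    have T₂ : Tendsto F₂ (𝓝[≠] c) (𝓝 (F₂ c)) :=
      (hF₂d.continuousAt.tendsto).mono_left nhdsWithin_le_nhds
    have T₁' : Tendsto F₁ (𝓝[≠] c) (𝓝 (F₂ c)) := T₂.congr' hEqP.symm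
    exact tendsto_nhds_unique T₁ T₁'
  have hEqN : F₁ =ᶠ[𝓝 c] F₂ := by
    rw [← nhdsNE_sup_pure, Filter.EventuallyEq, Filter.eventually_sup]
    exact ⟨hEqP, by rwa [Filter.eventually_pure]⟩
  have hderiv : deriv F₁ c = deriv F₂ c := hEqN.deriv_eq
  -- compute deriv F₁ c
  have hsplitQ : ∀ z : ℂ, Qc N z = ((n:ℂ) ^ 2 - z ^ 2) * Qe z := by
    intro z
    rw [Qc]
    exact (Finset.mul_prod_erase _ (fun j : ℕ => ((j : ℕ) : ℂ) ^ 2 - z ^ 2)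
      (Finset.mem_Icc.mpr ⟨hn1, hnN⟩)).symm
  have hF₁eq : F₁ = fun z => (sfun μ z * Qe z) * ((n:ℂ) ^ 2 - z ^ 2) := by
    funext z
    show sfun μ z * Qc N z = _
    rw [hsplitQ z]; ring
  have hsq : DifferentiableAt ℂ (fun z => sfun μ z * Qe z) c :=
    ((sfun_differentiable hN hb htail).mul hQed).differentiableAt
  have hD1 : HasDerivAt F₁
      (deriv (fun z => sfun μ z * Qe z) c * ((n:ℂ) ^ 2 - c ^ 2) +
        (sfun μ c * Qe c) * (-2 * c)) c := by
    rw [hF₁eq]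
    exact hsq.hasDerivAt.mul (hasDerivAt_fac (n:ℂ) c)
  have hnc : (n:ℂ) ^ 2 - c ^ 2 = 0 := by rw [hc]; ring
  rw [hnc, mul_zero, zero_add] at hD1
  -- compute deriv F₂ c
  have hu2 : DifferentiableAt ℂ (fun z : ℂ => Ac μ N z / z) c :=
    (Ac_diff.differentiableAt).div differentiableAt_id h0
  have hD2 : HasDerivAt F₂
      (((π : ℂ) * Complex.cos ((π : ℂ) * c)) * (Ac μ N c / c) +
        Complex.sin ((π : ℂ) * c) * deriv (fun z : ℂ => Ac μ N z / z) c) c :=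
    (hasDerivAt_sin_pi c).mul hu2.hasDerivAt
  rw [show Complex.sin ((π : ℂ) * c) = 0 from sin_pi_nat n, zero_mul, add_zero] at hD2
  -- combine
  have hkey : sfun μ c * Qe c * (-2 * c) = ((π : ℂ) * Complex.cos ((π : ℂ) * c)) * (Ac μ N c / c) := by
    rw [← hD1.deriv, ← hD2.deriv, hderiv]
  intro hzero
  rw [hzero, zero_mul, zero_mul] at hkey
  have hπ : ((π : ℝ) : ℂ) ≠ 0 := Complex.ofReal_ne_zero.mpr pi_ne_zero
  have hcos : Complex.cos ((π : ℂ) * c) ≠ 0 := by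
    rw [hc, cos_pi_nat n]
    exact Complex.ofReal_ne_zero.mpr (by positivity)
  have hAcc : Ac μ N c / c ≠ 0 := div_ne_zero hA h0
  exact (mul_ne_zero (mul_ne_zero hπ hcos) hAcc) hkey.symm


lemma deriv_mu_real {k : ℕ} (hk1 : 1 ≤ k) (hkN : k ≤ N)
    (hQ : Qc N ((μ k : ℝ) : ℂ) ≠ 0) (h0 : ((μ k : ℝ) : ℂ) ≠ 0) :
    deriv (sfun μ) ((μ k : ℝ) : ℂ) =
      (((-2 * μ k) * (Real.sin (π * μ k) *
        (∏ j ∈ (Finset.Icc 1 N).erase k, ((μ j) ^ 2 - (μ k) ^ 2)) /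
        (μ k * ∏ j ∈ Finset.Icc 1 N, ((j : ℝ) ^ 2 - (μ k) ^ 2))) : ℝ) : ℂ) := by
  rw [deriv_at_mu hN hb htail hk1 hQ h0 hkN, Qc_real, Br_real, sin_pi_ofReal]
  push_cast
  ring

lemma deriv_int_real {m : ℕ} (hm : N + 1 ≤ m) (hQ : Qc N ((m : ℕ) : ℂ) ≠ 0) :
    deriv (sfun μ) ((m : ℕ) : ℂ) =
      ((π * (-1 : ℝ) ^ m * ((∏ j ∈ Finset.Icc 1 N, ((μ j) ^ 2 - (m : ℝ) ^ 2)) /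
        ((m : ℝ) * ∏ j ∈ Finset.Icc 1 N, ((j : ℝ) ^ 2 - (m : ℝ) ^ 2))) : ℝ) : ℂ) := by
  rw [deriv_at_int hN hb htail hm hQ, cos_pi_nat]
  have hcast : ((m : ℕ) : ℂ) = (((m : ℕ) : ℝ) : ℂ) := by push_cast; rfl
  rw [hcast, Ac_real, Qc_real]
  push_cast
  ring

end
end Stmt6Aux

open Stmt6Aux

theorem stmt6 (N : ℕ) (hN : 1 ≤ N) (μ : ℕ → ℝ)
    (hpos : ∀ n : ℕ, 1 ≤ n → 0 < μ n)
    (hmono : ∀ m n : ℕ, 1 ≤ m → m < n → μ m < μ n)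
    (hsmall : ∀ n : ℕ, 1 ≤ n → n ≤ N → |μ n - (N + 1 / 2)| < 1 / 10)
    (htail : ∀ n : ℕ, N + 1 ≤ n → μ n = n) :
    ∃ s : ℂ → ℂ, Differentiable ℂ s ∧
      -- the partial products of `π ∏ (μ_n² − μ²)/n²` converge locally uniformly to `s`
      TendstoLocallyUniformly
        (fun m : ℕ => fun z : ℂ =>
          (π : ℂ) * ∏ n ∈ Finset.Icc 1 m, (((μ n : ℂ) ^ 2 - z ^ 2) / (n : ℂ) ^ 2))
        s Filter.atTop ∧
      -- `s` equals `(sin(πμ)/μ) ∏_{n=1}^N (μ_n² − μ²)/(n² − μ²)` (removable singularity filled)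
      (∀ z : ℂ, (∀ n : ℕ, 1 ≤ n → n ≤ N → z ^ 2 ≠ (n : ℂ) ^ 2) →
        s z = (if z = 0 then (π : ℂ) else Complex.sin ((π : ℂ) * z) / z) *
          ∏ n ∈ Finset.Icc 1 N, (((μ n : ℂ) ^ 2 - z ^ 2) / ((n : ℂ) ^ 2 - z ^ 2))) ∧
      -- all zeros of `s` are simple
      (∀ z : ℂ, s z = 0 → deriv s z ≠ 0) ∧
      -- `(−1)^n s'(μ_n) > 0` for every `n ≥ 1`
      (∀ n : ℕ, 1 ≤ n → ∃ t : ℝ, 0 < t ∧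
        (-1 : ℂ) ^ n * deriv s ((μ n : ℂ)) = (t : ℂ)) := by
  have hlo : ∀ k, 1 ≤ k → k ≤ N → (N : ℝ) + 2/5 < μ k := by
    intro k h1 h2
    have h3 := hsmall k h1 h2
    rw [abs_lt] at h3
    linarith [h3.1]
  have hhi : ∀ k, 1 ≤ k → k ≤ N → μ k < (N : ℝ) + 3/5 := by
    intro k h1 h2
    have h3 := hsmall k h1 h2
    rw [abs_lt] at h3
    linarith [h3.2]
  have hb : ∀ k, 1 ≤ k → k ≤ N → |μ k| ≤ (N : ℝ) + 1 := by
    intro k h1 h2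
    have h3 := hlo k h1 h2
    have h4 := hhi k h1 h2
    have h5 : (0:ℝ) ≤ N := Nat.cast_nonneg N
    rw [abs_le]
    constructor <;> linarith
  have heven := sfun_even hN hb htail
  have hπc : ((π : ℝ) : ℂ) ≠ 0 := Complex.ofReal_ne_zero.mpr pi_ne_zero
  have hQμ : ∀ k, 1 ≤ k → k ≤ N → Qc N ((μ k : ℝ) : ℂ) ≠ 0 := by
    intro k h1 h2
    rw [Qc_real, Complex.ofReal_ne_zero, Finset.prod_ne_zero_iff]
    intro j hj
    rw [Finset.mem_Icc] at hj
    have h3 := hlo k h1 h2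
    have h8 : (j : ℝ) ≤ N := by exact_mod_cast hj.2
    have h9 : (0 : ℝ) < j := by exact_mod_cast (by omega : 0 < j)
    intro hc
    nlinarith
  have hQm : ∀ m : ℕ, N + 1 ≤ m → Qc N ((m : ℕ) : ℂ) ≠ 0 := by
    intro m hm
    rw [show ((m : ℕ) : ℂ) = (((m : ℕ) : ℝ) : ℂ) by push_cast; rfl, Qc_real,
      Complex.ofReal_ne_zero, Finset.prod_ne_zero_iff]
    intro j hj
    rw [Finset.mem_Icc] at hj
    have h8 : (j : ℝ) ≤ N := by exact_mod_cast hj.2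
    have hm' : (N : ℝ) + 1 ≤ m := by exact_mod_cast hm
    have h9 : (0 : ℝ) < j := by exact_mod_cast (by omega : 0 < j)
    intro hc
    nlinarith
  have hAm : ∀ m : ℕ, N + 1 ≤ m → Ac μ N ((m : ℕ) : ℂ) ≠ 0 := by
    intro m hm
    rw [show ((m : ℕ) : ℂ) = (((m : ℕ) : ℝ) : ℂ) by push_cast; rfl, Ac_real,
      Complex.ofReal_ne_zero, Finset.prod_ne_zero_iff]
    intro j hj
    rw [Finset.mem_Icc] at hj
    have h1 := hhi j hj.1 hj.2
    have h2 := hpos j hj.1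
    have hm' : (N : ℝ) + 1 ≤ m := by exact_mod_cast hm
    intro hc
    nlinarith
  have hAn : ∀ n, 1 ≤ n → n ≤ N → Ac μ N ((n : ℕ) : ℂ) ≠ 0 := by
    intro n h1 h2
    rw [show ((n : ℕ) : ℂ) = (((n : ℕ) : ℝ) : ℂ) by push_cast; rfl, Ac_real,
      Complex.ofReal_ne_zero, Finset.prod_ne_zero_iff]
    intro j hj
    rw [Finset.mem_Icc] at hj
    have h3 := hlo j hj.1 hj.2
    have h4 := hpos j hj.1
    have h8 : (n : ℝ) ≤ N := by exact_mod_cast h2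
    have h9 : (0 : ℝ) ≤ n := Nat.cast_nonneg n
    intro hc
    nlinarith
  have hμ0 : ∀ k, 1 ≤ k → ((μ k : ℝ) : ℂ) ≠ 0 := fun k h1 =>
    Complex.ofReal_ne_zero.mpr (hpos k h1).ne'
  have hdμ : ∀ k, 1 ≤ k → k ≤ N → deriv (sfun μ) ((μ k : ℝ) : ℂ) ≠ 0 := by
    intro k h1 h2
    rw [deriv_mu_real hN hb htail h1 h2 (hQμ k h1 h2) (hμ0 k h1), Complex.ofReal_ne_zero]
    intro hzero
    have hsg := sign_at_mu hN hpos hmono hlo hhi h1 h2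
    rw [hzero, mul_zero] at hsg
    exact lt_irrefl 0 hsg
  have hdm : ∀ m : ℕ, N + 1 ≤ m → deriv (sfun μ) ((m : ℕ) : ℂ) ≠ 0 := by
    intro m hm
    rw [deriv_int_real hN hb htail hm (hQm m hm), Complex.ofReal_ne_zero]
    intro hzero
    have hsg := sign_at_int hN hhi hpos hm
    rw [hzero, mul_zero] at hsg
    exact lt_irrefl 0 hsg
  refine ⟨sfun μ, sfun_differentiable hN hb htail, PP_tlu hN hb htail, ?_, ?_, ?_⟩
  · intro z hz
    exact sfun_eq hN hb htail hz
  · intro z hz0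
    by_cases hQ : Qc N z = 0
    · exfalso
      rw [Qc, Finset.prod_eq_zero_iff] at hQ
      obtain ⟨n, hn, hzero⟩ := hQ
      rw [Finset.mem_Icc] at hn
      have hfac : ((n : ℂ) - z) * ((n : ℂ) + z) = 0 := by linear_combination hzero
      have hsn : sfun μ ((n : ℕ) : ℂ) ≠ 0 :=
        sfun_ne_zero_at_small_int hN hb htail hn.1 hn.2 (hAn n hn.1 hn.2)
      rcases mul_eq_zero.mp hfac with h | h
      · have hz : z = ((n : ℕ) : ℂ) := by linear_combination -h
        exact hsn (hz ▸ hz0)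
      · have hz : z = -((n : ℕ) : ℂ) := by linear_combination h
        apply hsn
        rw [← heven ((n : ℕ) : ℂ), ← hz]
        exact hz0
    · by_cases h00 : z = 0
      · exfalso
        subst h00
        have hzhyp : ∀ n : ℕ, 1 ≤ n → n ≤ N → (0 : ℂ) ^ 2 ≠ (n : ℂ) ^ 2 := by
          intro n h1 _ hc
          have h2 : ((n : ℕ) : ℂ) ^ 2 = 0 := by rw [← hc]; norm_num
          have h3 : ((n : ℕ) : ℂ) = 0 := pow_eq_zero_iff two_ne_zero |>.mp h2
          exact Nat.cast_ne_zero.mpr (by omega) h3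
        have h4 := sfun_eq hN hb htail hzhyp
        rw [h4] at hz0
        rcases mul_eq_zero.mp hz0 with h | h
        · rw [gfun, if_pos rfl] at h
          exact hπc h
        · rw [Finset.prod_eq_zero_iff] at h
          obtain ⟨j, hj, hj0⟩ := h
          rw [Finset.mem_Icc] at hj
          rcases div_eq_zero_iff.mp hj0 with h5 | h5
          · have h6 : ((μ j : ℝ) : ℂ) ^ 2 = 0 := by rw [← h5]; ring
            have h7 : ((μ j : ℝ) : ℂ) = 0 := pow_eq_zero_iff two_ne_zero |>.mp h6
            exact hμ0 j hj.1 h7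
          · have h6 : ((j : ℕ) : ℂ) ^ 2 = 0 := by rw [← h5]; ring
            have h7 : ((j : ℕ) : ℂ) = 0 := pow_eq_zero_iff two_ne_zero |>.mp h6
            exact Nat.cast_ne_zero.mpr (by omega) h7
      · have h4 := sfun_eq' hN hb htail hQ h00
        rw [hz0] at h4
        have h5 : Complex.sin ((π : ℂ) * z) * Ac μ N z = 0 := by
          rcases div_eq_zero_iff.mp h4.symm with h | h
          · exact h
          · exact absurd h (mul_ne_zero h00 hQ)
        rcases mul_eq_zero.mp h5 with hsin | hac
        · obtain ⟨kk, hkk⟩ := Complex.sin_eq_zero_iff.mp hsin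
          have hzkk : z = ((kk : ℤ) : ℂ) := by
            have h7 : (π : ℂ) * z = (π : ℂ) * ((kk : ℤ) : ℂ) := by rw [hkk]; ring
            exact mul_left_cancel₀ hπc h7
          have hkk0 : kk ≠ 0 := by
            rintro rfl
            apply h00
            rw [hzkk]
            norm_num
          set m := kk.natAbs with hmdef
          have hm1 : 1 ≤ m := Int.natAbs_pos.mpr hkk0
          have hzpm : z = ((m : ℕ) : ℂ) ∨ z = -((m : ℕ) : ℂ) := by
            rcases Int.natAbs_eq kk with h | h
            · left; rw [hzkk, h]; norm_cast
            · right; rw [hzkk, h]; norm_cast; rw [hmdef, Int.abs_eq_natAbs]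
          have hmN : N + 1 ≤ m := by
            by_contra hcon
            push_neg at hcon
            apply hQ
            rw [Qc]
            apply Finset.prod_eq_zero (Finset.mem_Icc.mpr ⟨hm1, by omega⟩)
            rcases hzpm with h | h <;> rw [h] <;> ring
          rcases hzpm with h | h
          · rw [h]; exact hdm m hmN
          · rw [h, deriv_sfun_neg heven]
            exact neg_ne_zero.mpr (hdm m hmN)
        · rw [Ac, Finset.prod_eq_zero_iff] at hac
          obtain ⟨k, hk, hk0⟩ := hac
          rw [Finset.mem_Icc] at hk
          have hfac2 : (((μ k : ℝ) : ℂ) - z) * (((μ k : ℝ) : ℂ) + z) = 0 := by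
            linear_combination hk0
          rcases mul_eq_zero.mp hfac2 with h | h
          · have hz : z = ((μ k : ℝ) : ℂ) := by linear_combination -h
            rw [hz]; exact hdμ k hk.1 hk.2
          · have hz : z = -((μ k : ℝ) : ℂ) := by linear_combination h
            rw [hz, deriv_sfun_neg heven]
            exact neg_ne_zero.mpr (hdμ k hk.1 hk.2)
  · intro n h1
    by_cases h2 : n ≤ N
    · refine ⟨(-1 : ℝ) ^ n * ((-2 * μ n) * (Real.sin (π * μ n) *
        (∏ j ∈ (Finset.Icc 1 N).erase n, ((μ j) ^ 2 - (μ n) ^ 2)) /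
        (μ n * ∏ j ∈ Finset.Icc 1 N, ((j : ℝ) ^ 2 - (μ n) ^ 2)))),
        sign_at_mu hN hpos hmono hlo hhi h1 h2, ?_⟩
      rw [deriv_mu_real hN hb htail h1 h2 (hQμ n h1 h2) (hμ0 n h1)]
      push_cast
      ring
    · have h3 : N + 1 ≤ n := by omega
      have hμn : ((μ n : ℝ) : ℂ) = ((n : ℕ) : ℂ) := by rw [htail n h3]; push_cast; rfl
      refine ⟨(-1 : ℝ) ^ n * (π * (-1 : ℝ) ^ n *
        ((∏ j ∈ Finset.Icc 1 N, ((μ j) ^ 2 - (n : ℝ) ^ 2)) /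
        ((n : ℝ) * ∏ j ∈ Finset.Icc 1 N, ((j : ℝ) ^ 2 - (n : ℝ) ^ 2)))),
        sign_at_int hN hhi hpos h3, ?_⟩
      rw [hμn, deriv_int_real hN hb htail h3 (hQm n h3)]
      push_cast
      ring
end

section
/- Let N be a positive integer and let (μ_n)_{n≥1} be a strictly increasing sequence of positive real numbers such that |μ_n − (N + 1/2)| < 1/10 for 1 ≤ n ≤ N and μ_n = n for n ≥ N + 1, and let s(μ) = π ∏_{n=1}^∞ (μ_n² − μ²)/n². Then there exist constants C₃ > 0 and C₄ > 0 such that |μ s(μ)| ≥ C₃ e^{π|Im μ|} whenever |Im μ| ≥ 1, and |μ s(μ)| ≥ C₄ for all μ in the set H, the union over integers m ≥ N + 1 of the vertical segments { z ∈ ℂ : |Re z| = m + 1/2, |Im z| ≤ 1 }. -/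
open Real Set

private lemma sinh_le_norm_sin (w : ℂ) :
    (Real.exp |w.im| - Real.exp (-|w.im|)) / 2 ≤ ‖Complex.sin w‖ := by
  have h1 : ‖Complex.sin w‖ = ‖Complex.exp (-w * Complex.I) - Complex.exp (w * Complex.I)‖ / 2 := by
    rw [Complex.sin]
    simp [norm_mul, norm_div, Complex.norm_I]
  have h2 : |‖Complex.exp (-w * Complex.I)‖ - ‖Complex.exp (w * Complex.I)‖|
      ≤ ‖Complex.exp (-w * Complex.I) - Complex.exp (w * Complex.I)‖ := abs_norm_sub_norm_le _ _
  have e1 : ‖Complex.exp (-w * Complex.I)‖ = Real.exp w.im := by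
    rw [Complex.norm_exp]; congr 1; simp [Complex.mul_re]
  have e2 : ‖Complex.exp (w * Complex.I)‖ = Real.exp (-w.im) := by
    rw [Complex.norm_exp]; congr 1; simp [Complex.mul_re]
  rw [e1, e2] at h2
  have h3 : Real.exp |w.im| - Real.exp (-|w.im|) ≤ |Real.exp w.im - Real.exp (-w.im)| := by
    rcases le_total 0 w.im with h | h
    · rw [abs_of_nonneg h, abs_of_nonneg (sub_nonneg.mpr (Real.exp_le_exp.mpr (by linarith)))]
    · rw [abs_of_nonpos h, abs_of_nonpos (sub_nonpos.mpr (Real.exp_le_exp.mpr (by linarith)))]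
      rw [neg_neg]; linarith
  rw [h1]
  linarith [le_trans h3 h2]

private lemma sin_re_eq (w : ℂ) :
    (Complex.sin w).re = Real.sin w.re * Real.cosh w.im := by
  rw [Complex.sin_eq]
  rw [← Complex.ofReal_cos, ← Complex.ofReal_cosh, ← Complex.ofReal_sinh]
  simp [Complex.add_re, Complex.mul_re]
  exact Or.inl (Complex.sin_ofReal_re w.re)

private lemma ratio_bound (a b : ℂ) (D : ℝ) (hD : 0 ≤ D) (ha : 1 ≤ ‖a‖) (hb : b ≠ 0)
    (hab : ‖b‖ ≤ ‖a‖ + D) : (1 + D)⁻¹ ≤ ‖a / b‖ := by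
  have hb' : 0 < ‖b‖ := norm_pos_iff.mpr hb
  have h1D : (0 : ℝ) < 1 + D := by linarith
  rw [norm_div, le_div_iff₀ hb']
  have h2 : ‖b‖ ≤ ‖a‖ * (1 + D) := by nlinarith
  calc (1 + D)⁻¹ * ‖b‖ ≤ (1 + D)⁻¹ * (‖a‖ * (1 + D)) :=
        mul_le_mul_of_nonneg_left h2 (inv_nonneg.mpr h1D.le)
    _ = ‖a‖ := by field_simp

private lemma factor_re (t : ℝ) (z : ℂ) :
    (((t : ℂ)) ^ 2 - z ^ 2).re = t ^ 2 - (z.re ^ 2 - z.im ^ 2) := by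
  simp [pow_two, Complex.mul_re]

private lemma factor_im (t : ℝ) (z : ℂ) :
    (((t : ℂ)) ^ 2 - z ^ 2).im = -(2 * z.re * z.im) := by
  simp [pow_two, Complex.mul_im]; ring

private lemma factor_cast (n : ℕ) (z : ℂ) :
    ((n : ℂ)) ^ 2 - z ^ 2 = (((n : ℝ) : ℂ)) ^ 2 - z ^ 2 := by
  norm_num

/-- The key product identity:  `z·s(z) = sin(πz) · ∏_{n=1}^N (μ_n²−z²)/(n²−z²)`. -/
private lemma prod_identity (N : ℕ) (μ : ℕ → ℝ)
    (htail : ∀ n : ℕ, N + 1 ≤ n → μ n = n) (s : ℂ → ℂ) (z : ℂ)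
    (hs : Filter.Tendsto
      (fun m : ℕ => (π : ℂ) * ∏ n ∈ Finset.Icc 1 m, (((μ n : ℂ) ^ 2 - z ^ 2) / (n : ℂ) ^ 2))
      Filter.atTop (nhds (s z)))
    (hzn : ∀ n ∈ Finset.Icc 1 N, ((n : ℂ) ^ 2 - z ^ 2) ≠ 0) :
    z * s z = (∏ n ∈ Finset.Icc 1 N, (((μ n : ℂ) ^ 2 - z ^ 2) / ((n : ℂ) ^ 2 - z ^ 2)))
      * Complex.sin ((π : ℂ) * z) := by
  set Q : ℂ := ∏ n ∈ Finset.Icc 1 N, (((μ n : ℂ) ^ 2 - z ^ 2) / ((n : ℂ) ^ 2 - z ^ 2))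
    with hQdef
  have h1 : Filter.Tendsto (fun m : ℕ => z * ((π : ℂ) * ∏ n ∈ Finset.Icc 1 m,
      (((μ n : ℂ) ^ 2 - z ^ 2) / (n : ℂ) ^ 2))) Filter.atTop (nhds (z * s z)) :=
    hs.const_mul z
  have h2 : Filter.Tendsto (fun m : ℕ => Q * ((π : ℂ) * z * ∏ j ∈ Finset.range m,
      ((1 : ℂ) - z ^ 2 / ((j : ℂ) + 1) ^ 2))) Filter.atTop
      (nhds (Q * Complex.sin ((π : ℂ) * z))) :=
    (Complex.tendsto_euler_sin_prod z).const_mul Q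
  refine tendsto_nhds_unique h1 (h2.congr' ?_)
  · filter_upwards [Filter.eventually_ge_atTop N] with m hm
    have hsplit : ∀ F : ℕ → ℂ, ∏ n ∈ Finset.Icc 1 m, F n
        = (∏ n ∈ Finset.Icc 1 N, F n) * ∏ n ∈ Finset.Ioc N m, F n := by
      intro F
      rw [show Finset.Icc 1 m = Finset.Ioc 0 m from Finset.Icc_add_one_left_eq_Ioc 0 m,
        show Finset.Icc 1 N = Finset.Ioc 0 N from Finset.Icc_add_one_left_eq_Ioc 0 N]
      exact (Finset.prod_Ioc_consecutive F (Nat.zero_le N) hm).symm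
    have e1 : ∏ j ∈ Finset.range m, ((1 : ℂ) - z ^ 2 / ((j : ℂ) + 1) ^ 2)
        = ∏ n ∈ Finset.Icc 1 m, ((1 : ℂ) - z ^ 2 / ((n : ℂ) ^ 2)) := by
      rw [← Finset.Ico_add_one_right_eq_Icc, Finset.prod_Ico_eq_prod_range]
      apply Finset.prod_congr (by simp)
      intro j _
      push_cast
      ring
    have e2 : ∏ n ∈ Finset.Icc 1 m, (((μ n : ℂ) ^ 2 - z ^ 2) / (n : ℂ) ^ 2)
        = Q * ∏ n ∈ Finset.Icc 1 m, ((1 : ℂ) - z ^ 2 / ((n : ℂ) ^ 2)) := by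
      rw [hsplit (fun n => ((μ n : ℂ) ^ 2 - z ^ 2) / (n : ℂ) ^ 2),
        hsplit (fun n => (1 : ℂ) - z ^ 2 / ((n : ℂ) ^ 2))]
      have t1 : ∏ n ∈ Finset.Ioc N m, (((μ n : ℂ) ^ 2 - z ^ 2) / (n : ℂ) ^ 2)
          = ∏ n ∈ Finset.Ioc N m, ((1 : ℂ) - z ^ 2 / ((n : ℂ) ^ 2)) := by
        apply Finset.prod_congr rfl
        intro n hn
        rw [Finset.mem_Ioc] at hn
        have hn0 : (n : ℂ) ≠ 0 := Nat.cast_ne_zero.mpr (by omega)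
        rw [htail n (by omega)]
        field_simp
        push_cast; ring
      have t2 : ∏ n ∈ Finset.Icc 1 N, (((μ n : ℂ) ^ 2 - z ^ 2) / (n : ℂ) ^ 2)
          = Q * ∏ n ∈ Finset.Icc 1 N, ((1 : ℂ) - z ^ 2 / ((n : ℂ) ^ 2)) := by
        rw [hQdef, ← Finset.prod_mul_distrib]
        apply Finset.prod_congr rfl
        intro n hn
        have hmem := Finset.mem_Icc.mp hn
        have hn0 : (n : ℂ) ≠ 0 := Nat.cast_ne_zero.mpr (by omega)
        have hnz := hzn n hn
        field_simp
      rw [t1, t2]; ring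
    rw [e2, e1]; ring

/-- Lower bound for the norm of the correction product. -/
private lemma prod_norm_bound (N : ℕ) (μ : ℕ → ℝ) (z : ℂ)
    (hzn : ∀ n ∈ Finset.Icc 1 N, ((n : ℂ) ^ 2 - z ^ 2) ≠ 0)
    (h1 : ∀ n ∈ Finset.Icc 1 N, 1 ≤ ‖(μ n : ℂ) ^ 2 - z ^ 2‖) :
    (∏ n ∈ Finset.Icc 1 N, (1 + ((μ n) ^ 2 + (n : ℝ) ^ 2))⁻¹)
      ≤ ‖∏ n ∈ Finset.Icc 1 N, (((μ n : ℂ) ^ 2 - z ^ 2) / ((n : ℂ) ^ 2 - z ^ 2))‖ := by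
  rw [norm_prod]
  refine Finset.prod_le_prod (fun n _ => inv_nonneg.mpr (by positivity)) ?_
  intro n hn
  refine ratio_bound _ _ _ (by positivity) (h1 n hn) (hzn n hn) ?_
  have heq : ((n : ℂ) ^ 2 - z ^ 2)
      = ((μ n : ℂ) ^ 2 - z ^ 2) + ((((n : ℝ) ^ 2 - (μ n) ^ 2 : ℝ)) : ℂ) := by
    push_cast; ring
  calc ‖(n : ℂ) ^ 2 - z ^ 2‖
      ≤ ‖(μ n : ℂ) ^ 2 - z ^ 2‖ + ‖((((n : ℝ) ^ 2 - (μ n) ^ 2 : ℝ)) : ℂ)‖ := by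
        rw [heq]; exact norm_add_le _ _
    _ ≤ ‖(μ n : ℂ) ^ 2 - z ^ 2‖ + ((μ n) ^ 2 + (n : ℝ) ^ 2) := by
        rw [Complex.norm_real, Real.norm_eq_abs]
        have habs : |(n : ℝ) ^ 2 - (μ n) ^ 2| ≤ (μ n) ^ 2 + (n : ℝ) ^ 2 := by
          rw [abs_le]
          constructor <;> nlinarith [sq_nonneg (μ n), sq_nonneg ((n : ℝ))]
        linarith

/-- Region 1: the denominators do not vanish when `|Im z| ≥ 1`. -/
private lemma region1_ne (N : ℕ) (z : ℂ) (hy : 1 ≤ |z.im|) :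
    ∀ n ∈ Finset.Icc 1 N, ((n : ℂ) ^ 2 - z ^ 2) ≠ 0 := by
  intro n hn h
  have hmem := Finset.mem_Icc.mp hn
  have hn1 : (1 : ℝ) ≤ (n : ℝ) := by exact_mod_cast hmem.1
  have h1 : ((n : ℂ) ^ 2 - z ^ 2).im = 0 := by rw [h]; simp
  have h2 : ((n : ℂ) ^ 2 - z ^ 2).re = 0 := by rw [h]; simp
  rw [factor_cast, factor_im] at h1
  rw [factor_cast, factor_re] at h2
  have hy1 : (1 : ℝ) ≤ z.im ^ 2 := by nlinarith [sq_abs z.im, abs_nonneg z.im]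
  have hy0 : z.im ≠ 0 := by intro h0; rw [h0] at hy; simp at hy; linarith
  have hx0 : z.re = 0 := by
    rcases mul_eq_zero.mp (by linarith : (2 * z.re) * z.im = 0) with h' | h'
    · linarith
    · exact absurd h' hy0
  rw [hx0] at h2
  nlinarith

/-- Region 1: the numerators are large when `|Im z| ≥ 1`. -/
private lemma region1_num (N : ℕ) (μ : ℕ → ℝ) (z : ℂ) (hy : 1 ≤ |z.im|)
    (hμ1 : ∀ n ∈ Finset.Icc 1 N, 1 ≤ μ n) :
    ∀ n ∈ Finset.Icc 1 N, 1 ≤ ‖(μ n : ℂ) ^ 2 - z ^ 2‖ := by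
  intro n hn
  have hy1 : (1 : ℝ) ≤ z.im ^ 2 := by nlinarith [sq_abs z.im, abs_nonneg z.im]
  have hμ := hμ1 n hn
  by_cases hcase : z.re ^ 2 ≤ (μ n) ^ 2
  · have h1 : 1 ≤ ((μ n : ℂ) ^ 2 - z ^ 2).re := by rw [factor_re]; nlinarith
    calc (1 : ℝ) ≤ |((μ n : ℂ) ^ 2 - z ^ 2).re| := le_trans h1 (le_abs_self _)
      _ ≤ ‖(μ n : ℂ) ^ 2 - z ^ 2‖ := Complex.abs_re_le_norm _
  · have hx1 : 1 ≤ |z.re| := by nlinarith [sq_abs z.re, abs_nonneg z.re]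
    have h1 : 1 ≤ |((μ n : ℂ) ^ 2 - z ^ 2).im| := by
      rw [factor_im, abs_neg, abs_mul, abs_mul, abs_two]
      nlinarith [abs_nonneg z.re, abs_nonneg z.im]
    calc (1 : ℝ) ≤ |((μ n : ℂ) ^ 2 - z ^ 2).im| := h1
      _ ≤ ‖(μ n : ℂ) ^ 2 - z ^ 2‖ := Complex.abs_im_le_norm _

/-- Region H: the denominators do not vanish. -/
private lemma regionH_ne (N : ℕ) (z : ℂ) (hx2 : ((N : ℝ) + 3/2) ^ 2 ≤ z.re ^ 2)
    (hy2 : z.im ^ 2 ≤ 1) :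
    ∀ n ∈ Finset.Icc 1 N, ((n : ℂ) ^ 2 - z ^ 2) ≠ 0 := by
  intro n hn h
  have hmem := Finset.mem_Icc.mp hn
  have hnN : (n : ℝ) ≤ (N : ℝ) := by exact_mod_cast hmem.2
  have hn0 : (0 : ℝ) ≤ (n : ℝ) := Nat.cast_nonneg n
  have h2 : ((n : ℂ) ^ 2 - z ^ 2).re = 0 := by rw [h]; simp
  rw [factor_cast, factor_re] at h2
  nlinarith

/-- Region H: the numerators are large. -/
private lemma regionH_num (N : ℕ) (μ : ℕ → ℝ) (z : ℂ) (hN1 : (1 : ℝ) ≤ (N : ℝ))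
    (hx2 : ((N : ℝ) + 3/2) ^ 2 ≤ z.re ^ 2) (hy2 : z.im ^ 2 ≤ 1)
    (hμlo : ∀ n ∈ Finset.Icc 1 N, (N : ℝ) + 2/5 < μ n)
    (hμhi : ∀ n ∈ Finset.Icc 1 N, μ n < (N : ℝ) + 3/5) :
    ∀ n ∈ Finset.Icc 1 N, 1 ≤ ‖(μ n : ℂ) ^ 2 - z ^ 2‖ := by
  intro n hn
  have h1 := hμlo n hn
  have h2 := hμhi n hn
  have h3 : (0 : ℝ) < μ n := by linarith
  have hsq : μ n ^ 2 < ((N : ℝ) + 3/5) ^ 2 := by nlinarith [h2, h3]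
  have hNN : (2 : ℝ) ≤ ((N : ℝ) + 3/2) ^ 2 - ((N : ℝ) + 3/5) ^ 2 := by nlinarith [hN1]
  have hle : ((μ n : ℂ) ^ 2 - z ^ 2).re ≤ -1 := by rw [factor_re]; linarith
  calc (1 : ℝ) ≤ |((μ n : ℂ) ^ 2 - z ^ 2).re| := by
        have : (1 : ℝ) ≤ -(((μ n : ℂ) ^ 2 - z ^ 2).re) := by linarith
        exact le_trans this (neg_le_abs _)
    _ ≤ ‖(μ n : ℂ) ^ 2 - z ^ 2‖ := Complex.abs_re_le_norm _

/-- On the vertical segments the sine factor is at least one. -/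
private lemma sin_bound_H (N : ℕ) (z : ℂ) (hzH : ∃ m : ℕ, N + 1 ≤ m ∧ |z.re| = m + 1 / 2) :
    1 ≤ ‖Complex.sin ((π : ℂ) * z)‖ := by
  obtain ⟨m, _, hx⟩ := hzH
  have hre' : ((π : ℂ) * z).re = π * z.re := by simp [Complex.mul_re]
  have him' : ((π : ℂ) * z).im = π * z.im := by simp [Complex.mul_im]
  have hs1 : |Real.sin (π * z.re)| = 1 := by
    have habs : |Real.sin (π * |z.re|)| = 1 := by
      rw [hx]
      have heq : π * ((m : ℝ) + 1/2) = (m : ℝ) * π + π / 2 := by ring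
      rw [heq, Real.sin_add, Real.sin_pi_div_two, Real.cos_pi_div_two, Real.sin_nat_mul_pi]
      simpa using Real.abs_cos_int_mul_pi (m : ℤ)
    rcases abs_choice z.re with h | h
    · rwa [h] at habs
    · rw [h] at habs
      rw [show π * -z.re = -(π * z.re) by ring, Real.sin_neg, abs_neg] at habs
      exact habs
  have hrebound : 1 ≤ |(Complex.sin ((π : ℂ) * z)).re| := by
    rw [sin_re_eq, hre', him', abs_mul, hs1, one_mul, abs_of_nonneg (Real.cosh_pos _).le]
    exact Real.one_le_cosh _
  calc (1 : ℝ) ≤ |(Complex.sin ((π : ℂ) * z)).re| := hrebound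
    _ ≤ ‖Complex.sin ((π : ℂ) * z)‖ := Complex.abs_re_le_norm _

/-- When `|Im z| ≥ 1` the sine factor grows exponentially. -/
private lemma sin_bound_1 (z : ℂ) (hy : 1 ≤ |z.im|) :
    (1 - Real.exp (-(2 * π))) / 2 * Real.exp (π * |z.im|)
      ≤ ‖Complex.sin ((π : ℂ) * z)‖ := by
  have him' : ((π : ℂ) * z).im = π * z.im := by simp [Complex.mul_im]
  have haux := sinh_le_norm_sin ((π : ℂ) * z)
  rw [him', abs_mul, abs_of_nonneg Real.pi_pos.le] at haux
  have ha : π ≤ π * |z.im| := by nlinarith [Real.pi_pos]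
  have hexp : Real.exp (-(π * |z.im|))
      = Real.exp (π * |z.im|) * Real.exp (-(2 * (π * |z.im|))) := by
    rw [← Real.exp_add]; ring_nf
  have hexp2 : Real.exp (-(2 * (π * |z.im|))) ≤ Real.exp (-(2 * π)) :=
    Real.exp_le_exp.mpr (by linarith)
  have hexp3 : (0 : ℝ) < Real.exp (π * |z.im|) := Real.exp_pos _
  nlinarith [haux, Real.exp_pos (-(2 * π))]

theorem stmt7 (N : ℕ) (hN : 1 ≤ N) (μ : ℕ → ℝ)
    (hpos : ∀ n : ℕ, 1 ≤ n → 0 < μ n)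
    (hmono : ∀ m n : ℕ, 1 ≤ m → m < n → μ m < μ n)
    (hsmall : ∀ n : ℕ, 1 ≤ n → n ≤ N → |μ n - (N + 1 / 2)| < 1 / 10)
    (htail : ∀ n : ℕ, N + 1 ≤ n → μ n = n)
    (s : ℂ → ℂ)
    -- `s(μ) = π ∏_{n=1}^∞ (μ_n² − μ²)/n²` (pointwise limit of the partial products)
    (hs : ∀ z : ℂ, Filter.Tendsto
      (fun m : ℕ => (π : ℂ) * ∏ n ∈ Finset.Icc 1 m, (((μ n : ℂ) ^ 2 - z ^ 2) / (n : ℂ) ^ 2))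
      Filter.atTop (nhds (s z))) :
    ∃ C₃ > (0 : ℝ), ∃ C₄ > (0 : ℝ),
      (∀ z : ℂ, 1 ≤ |z.im| → C₃ * Real.exp (π * |z.im|) ≤ ‖z * s z‖) ∧
      (∀ z : ℂ, (∃ m : ℕ, N + 1 ≤ m ∧ |z.re| = m + 1 / 2) → |z.im| ≤ 1 →
        C₄ ≤ ‖z * s z‖) := by
  have hN1 : (1 : ℝ) ≤ (N : ℝ) := by exact_mod_cast hN
  have hμlo : ∀ n ∈ Finset.Icc 1 N, (N : ℝ) + 2/5 < μ n := by
    intro n hn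
    rw [Finset.mem_Icc] at hn
    have h := hsmall n hn.1 hn.2
    rw [abs_lt] at h
    linarith [h.1]
  have hμhi : ∀ n ∈ Finset.Icc 1 N, μ n < (N : ℝ) + 3/5 := by
    intro n hn
    rw [Finset.mem_Icc] at hn
    have h := hsmall n hn.1 hn.2
    rw [abs_lt] at h
    linarith [h.2]
  have hμ1 : ∀ n ∈ Finset.Icc 1 N, 1 ≤ μ n := by
    intro n hn
    have := hμlo n hn
    linarith
  set c : ℝ := ∏ n ∈ Finset.Icc 1 N, (1 + ((μ n) ^ 2 + (n : ℝ) ^ 2))⁻¹ with hcdef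
  have hc : 0 < c := Finset.prod_pos (fun n _ => inv_pos.mpr (by positivity))
  have hexp1 : Real.exp (-(2 * π)) < 1 := Real.exp_lt_one_iff.mpr (by nlinarith [Real.pi_pos])
  refine ⟨c * ((1 - Real.exp (-(2 * π))) / 2), ?_, c, hc, ?_, ?_⟩
  · have h2 : (0 : ℝ) < (1 - Real.exp (-(2 * π))) / 2 := by linarith
    exact mul_pos hc h2
  · -- region 1
    intro z hy
    have hza := region1_ne N z hy
    have hzb := region1_num N μ z hy hμ1
    rw [prod_identity N μ htail s z (hs z) hza, norm_mul]
    have hQ := prod_norm_bound N μ z hza hzb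
    have hsin := sin_bound_1 z hy
    calc c * ((1 - Real.exp (-(2 * π))) / 2) * Real.exp (π * |z.im|)
        = c * ((1 - Real.exp (-(2 * π))) / 2 * Real.exp (π * |z.im|)) := by ring
      _ ≤ ‖∏ n ∈ Finset.Icc 1 N, (((μ n : ℂ) ^ 2 - z ^ 2) / ((n : ℂ) ^ 2 - z ^ 2))‖
            * ‖Complex.sin ((π : ℂ) * z)‖ := by
          apply mul_le_mul hQ hsin ?_ (norm_nonneg _)
          exact mul_nonneg (by linarith) (Real.exp_pos _).le
  · -- region H
    intro z hzH hy
    obtain ⟨m, hm, hx⟩ := hzH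
    have hm' : (N : ℝ) + 1 ≤ (m : ℝ) := by exact_mod_cast hm
    have hx' : (N : ℝ) + 3/2 ≤ |z.re| := by rw [hx]; linarith
    have hx2 : ((N : ℝ) + 3/2) ^ 2 ≤ z.re ^ 2 := by nlinarith [sq_abs z.re, abs_nonneg z.re]
    have hy2 : z.im ^ 2 ≤ 1 := by nlinarith [sq_abs z.im, abs_nonneg z.im]
    have hza := regionH_ne N z hx2 hy2
    have hzb := regionH_num N μ z hN1 hx2 hy2 hμlo hμhi
    rw [prod_identity N μ htail s z (hs z) hza, norm_mul]
    have hQ := prod_norm_bound N μ z hza hzb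
    have hsin := sin_bound_H N z ⟨m, hm, hx⟩
    calc c = c * 1 := (mul_one c).symm
      _ ≤ ‖∏ n ∈ Finset.Icc 1 N, (((μ n : ℂ) ^ 2 - z ^ 2) / ((n : ℂ) ^ 2 - z ^ 2))‖
            * ‖Complex.sin ((π : ℂ) * z)‖ :=
          mul_le_mul hQ hsin zero_le_one (norm_nonneg _)
end

section
/- Let (r_n)_{n≥1} be a sequence of complex numbers with Σ_{n=1}^∞ |r_n|² < ∞ and set μ_n = n + r_n. Then there exists a constant c such that for every μ ∈ ℂ with Re μ ≥ 0 and |μ − n| ≥ 1/2 for all positive integers n, one has Σ_{n=1}^∞ |μ_n² − n²| / |n² − μ²| ≤ c. -/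
open Real Set

lemma aux_summable : Summable (fun k : ℕ => 1/(1+(k:ℝ)^2)) := by
  have h0 : Summable (fun k : ℕ => 1/((k:ℝ)+1)^2) := by
    have := Real.summable_one_div_nat_pow (p := 2)
    rw [← summable_nat_add_iff 1] at this
    simpa using this.2 (by norm_num)
  rw [← summable_nat_add_iff 1]
  apply Summable.of_nonneg_of_le (fun k => by positivity) _ h0
  intro k
  gcongr
  push_cast; nlinarith [sq_nonneg (k:ℝ)]
lemma aux_partial (x : ℝ) (hx : 0 ≤ x) (N : ℕ) :
    ∑ n ∈ Finset.range N, 1/(1+((n:ℝ)+1-x)^2) ≤ 2 * ∑' k : ℕ, 1/(1+(k:ℝ)^2) := by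
  classical
  set h : ℕ → ℝ := fun k => 1/(1+(k:ℝ)^2) with hh
  have hnn : ∀ k : ℕ, 0 ≤ h k := fun k => by positivity
  set m := (⌊x⌋).toNat with hmdef
  have h0 : (0:ℤ) ≤ ⌊x⌋ := Int.floor_nonneg.2 hx
  have hcast : ((m:ℕ):ℤ) = ⌊x⌋ := by rw [hmdef]; exact Int.toNat_of_nonneg h0
  have hmx : (m:ℝ) ≤ x := by
    have := Int.floor_le x
    rw [← hcast] at this; exact_mod_cast this
  have hxm : x < (m:ℝ) + 1 := by
    have := Int.lt_floor_add_one x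
    rw [← hcast] at this; exact_mod_cast this
  rw [← Finset.sum_filter_add_sum_filter_not (Finset.range N) (fun n => n + 1 ≤ m)]
  have h1 : ∑ n ∈ (Finset.range N).filter (fun n => n + 1 ≤ m), 1/(1+((n:ℝ)+1-x)^2)
      ≤ ∑' k : ℕ, h k := by
    calc ∑ n ∈ (Finset.range N).filter (fun n => n + 1 ≤ m), 1/(1+((n:ℝ)+1-x)^2)
        ≤ ∑ n ∈ (Finset.range N).filter (fun n => n + 1 ≤ m), h (m - 1 - n) := by
          apply Finset.sum_le_sum
          intro n hn
          have hn' : n + 1 ≤ m := by simpa using (Finset.mem_filter.1 hn).2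
          have hc : ((m - 1 - n : ℕ) : ℝ) = (m:ℝ) - 1 - n := by
            have he : m - 1 - n = m - (1 + n) := by omega
            rw [he, Nat.cast_sub (by omega : 1 + n ≤ m)]
            push_cast; ring
          rw [hh]; simp only; rw [hc]
          apply one_div_le_one_div_of_le (by positivity)
          have hge : (0:ℝ) ≤ (m:ℝ) - 1 - n := by
            have : (n:ℝ) + 1 ≤ m := by exact_mod_cast hn'
            linarith
          nlinarith [hmx]
      _ = ∑ k ∈ ((Finset.range N).filter (fun n => n + 1 ≤ m)).image (fun n => m - 1 - n), h k := by
          rw [Finset.sum_image]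
          intro a ha b hb hab
          have ha' : a + 1 ≤ m := by simpa using (Finset.mem_filter.1 ha).2
          have hb' : b + 1 ≤ m := by simpa using (Finset.mem_filter.1 hb).2
          simp only at hab; omega
      _ ≤ ∑' k : ℕ, h k := Summable.sum_le_tsum _ (fun k _ => hnn k) aux_summable
  have h2 : ∑ n ∈ (Finset.range N).filter (fun n => ¬(n + 1 ≤ m)), 1/(1+((n:ℝ)+1-x)^2)
      ≤ ∑' k : ℕ, h k := by
    calc ∑ n ∈ (Finset.range N).filter (fun n => ¬(n + 1 ≤ m)), 1/(1+((n:ℝ)+1-x)^2)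
        ≤ ∑ n ∈ (Finset.range N).filter (fun n => ¬(n + 1 ≤ m)), h (n - m) := by
          apply Finset.sum_le_sum
          intro n hn
          have hn' : m ≤ n := by
            have := (Finset.mem_filter.1 hn).2; simp at this; omega
          have hc : ((n - m : ℕ) : ℝ) = (n:ℝ) - m := by
            rw [Nat.cast_sub hn']
          rw [hh]; simp only; rw [hc]
          apply one_div_le_one_div_of_le (by positivity)
          have hge : (0:ℝ) ≤ (n:ℝ) - m := by
            have : (m:ℝ) ≤ n := by exact_mod_cast hn'
            linarith
          nlinarith [hxm]
      _ = ∑ k ∈ ((Finset.range N).filter (fun n => ¬(n + 1 ≤ m))).image (fun n => n - m), h k := by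
          rw [Finset.sum_image]
          intro a ha b hb hab
          have ha' : m ≤ a := by have := (Finset.mem_filter.1 ha).2; simp at this; omega
          have hb' : m ≤ b := by have := (Finset.mem_filter.1 hb).2; simp at this; omega
          simp only at hab; omega
      _ ≤ ∑' k : ℕ, h k := Summable.sum_le_tsum _ (fun k _ => hnn k) aux_summable
  linarith


lemma term_bound (ρ a b w t : ℝ) (hρ : 0 ≤ ρ) (ha : 1/2 ≤ a) (hba : a ≤ b)
    (hw : 1 ≤ w) (hwb : w ≤ b) (ht2 : t^2 ≤ a^2) :
    (ρ^2 + 2*w*ρ) / (a*b) ≤ 5*ρ^2 + 8/(1+t^2) := by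
  have hapos : 0 < a := by linarith
  have hbpos : 0 < b := by linarith
  have habpos : 0 < a*b := by positivity
  have hab14 : 1/4 ≤ a*b := by nlinarith
  rw [add_div]
  have h2 : ρ^2/(a*b) ≤ 4*ρ^2 := by
    rw [div_le_iff₀ habpos]
    nlinarith [mul_nonneg (sq_nonneg ρ) (by linarith : (0:ℝ) ≤ 4*(a*b)-1)]
  have h3 : 2*w*ρ/(a*b) ≤ 2*ρ/a := by
    rw [div_le_div_iff₀ habpos hapos]
    nlinarith [mul_nonneg (mul_nonneg hρ hapos.le) (sub_nonneg.2 hwb)]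
  have h4 : 2*ρ/a ≤ ρ^2 + 1/a^2 := by
    have e : 2*ρ/a = 2*ρ*(1/a) := by ring
    have e2 : 1/a^2 = (1/a)^2 := by rw [one_div_pow]
    rw [e, e2]
    nlinarith [sq_nonneg (ρ - 1/a)]
  have h5 : 1/a^2 ≤ 8/(1+t^2) := by
    rw [div_le_div_iff₀ (by positivity) (by positivity)]
    nlinarith [ht2, sq_nonneg (a - 1/2)]
  linarith

/-- Here `r n` plays the role of `r_{n+1}` and `μ_{n+1} = (n+1) + r n`. -/
theorem stmt11 (r : ℕ → ℂ) (hr : Summable (fun n : ℕ => ‖r n‖ ^ 2)) :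
    ∃ c : ℝ, ∀ z : ℂ, 0 ≤ z.re →
      (∀ n : ℕ, (1 : ℝ) / 2 ≤ ‖z - ((n : ℂ) + 1)‖) →
      Summable (fun n : ℕ =>
        ‖(((n : ℂ) + 1) + r n) ^ 2 - ((n : ℂ) + 1) ^ 2‖ / ‖((n : ℂ) + 1) ^ 2 - z ^ 2‖) ∧
      ∑' n : ℕ,
        ‖(((n : ℂ) + 1) + r n) ^ 2 - ((n : ℂ) + 1) ^ 2‖ / ‖((n : ℂ) + 1) ^ 2 - z ^ 2‖ ≤ c := by
  refine ⟨5 * (∑' n : ℕ, ‖r n‖^2) + 16 * (∑' k : ℕ, 1/(1+(k:ℝ)^2)), ?_⟩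
  intro z hz hsep
  set x := z.re with hxdef
  set f : ℕ → ℝ := fun n =>
    ‖(((n : ℂ) + 1) + r n) ^ 2 - ((n : ℂ) + 1) ^ 2‖ / ‖((n : ℂ) + 1) ^ 2 - z ^ 2‖ with hfdef
  have hg2sum : Summable (fun n : ℕ => 1/(1+((n:ℝ)+1-x)^2)) :=
    summable_of_sum_range_le (fun n => by positivity) (fun N => aux_partial x hz N)
  set g : ℕ → ℝ := fun n => 5*‖r n‖^2 + 8*(1/(1+((n:ℝ)+1-x)^2)) with hgdef
  have hgsum : Summable g := (hr.mul_left 5).add (hg2sum.mul_left 8)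
  have hfg : ∀ n, f n ≤ g n := by
    intro n
    set ρ := ‖r n‖ with hρdef
    set w := (n:ℝ)+1 with hwdef
    set a := ‖z - ((n : ℂ) + 1)‖ with hadef
    set b := ‖z + ((n : ℂ) + 1)‖ with hbdef
    have hρ : 0 ≤ ρ := norm_nonneg _
    have ha : 1/2 ≤ a := hsep n
    have hw : 1 ≤ w := by rw [hwdef]; linarith [Nat.cast_nonneg (α := ℝ) n]
    have hre : (z - ((n : ℂ) + 1)).re = x - w := by
      simp [Complex.sub_re, Complex.add_re, Complex.natCast_re, hwdef, hxdef]
    have him : (z - ((n : ℂ) + 1)).im = z.im := by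
      simp [Complex.sub_im, Complex.add_im, Complex.natCast_im]
    have hre' : (z + ((n : ℂ) + 1)).re = x + w := by
      simp [Complex.add_re, Complex.natCast_re, hwdef, hxdef]
    have him' : (z + ((n : ℂ) + 1)).im = z.im := by
      simp [Complex.add_im, Complex.natCast_im]
    have ea : a^2 = (x - w)^2 + z.im^2 := by
      rw [hadef, Complex.sq_norm, Complex.normSq_apply, hre, him]; ring
    have eb : b^2 = (x + w)^2 + z.im^2 := by
      rw [hbdef, Complex.sq_norm, Complex.normSq_apply, hre', him']; ring
    have hba : a ≤ b := by
      nlinarith [norm_nonneg (z - ((n : ℂ) + 1)), norm_nonneg (z + ((n : ℂ) + 1)), hz, hw]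
    have hwb : w ≤ b := by
      have h1 : (z + ((n : ℂ) + 1)).re ≤ b := Complex.re_le_norm _
      rw [hre'] at h1; linarith [hz]
    have ht2 : (w - x)^2 ≤ a^2 := by
      have habs : |(z - ((n : ℂ) + 1)).re| ≤ a := Complex.abs_re_le_norm _
      rw [hre] at habs
      nlinarith [abs_nonneg (x - w), sq_abs (x - w)]
    have hden : ‖((n : ℂ) + 1)^2 - z^2‖ = a * b := by
      have he : ((n : ℂ) + 1)^2 - z^2 = -((z - ((n : ℂ) + 1)) * (z + ((n : ℂ) + 1))) := by ring
      rw [he, norm_neg, norm_mul]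
    have hnum : ‖(((n : ℂ) + 1) + r n)^2 - ((n : ℂ) + 1)^2‖ ≤ ρ^2 + 2*w*ρ := by
      have he : (((n : ℂ) + 1) + r n)^2 - ((n : ℂ) + 1)^2 = r n * (r n + 2*((n : ℂ)+1)) := by
        ring
      rw [he, norm_mul]
      have h2n : ‖(2:ℂ)*((n:ℂ)+1)‖ = 2*w := by
        rw [norm_mul]
        have hc : ((n:ℂ)+1) = (((n+1:ℕ)):ℂ) := by push_cast; ring
        rw [hc, Complex.norm_natCast]
        norm_num [hwdef]
      calc ‖r n‖ * ‖r n + 2*((n:ℂ)+1)‖ ≤ ρ * (ρ + ‖(2:ℂ)*((n:ℂ)+1)‖) := by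
            apply mul_le_mul_of_nonneg_left (norm_add_le _ _) hρ
        _ = ρ^2 + 2*w*ρ := by rw [h2n]; ring
    have habpos : 0 < a * b := by nlinarith
    have hgn : g n = 5*ρ^2 + 8/(1+(w-x)^2) := by
      simp only [hgdef, hρdef, hwdef]; ring
    have hfn : f n = ‖(((n : ℂ) + 1) + r n)^2 - ((n : ℂ) + 1)^2‖ / (a*b) := by
      rw [hfdef]; simp only; rw [hden]
    have step1 : f n ≤ (ρ^2 + 2*w*ρ)/(a*b) := by
      rw [hfn]
      exact (div_le_div_iff_of_pos_right habpos).mpr hnum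
    rw [hgn]
    exact le_trans step1 (term_bound ρ a b w (w - x) hρ ha hba hw hwb ht2)
  have hf0 : ∀ n, 0 ≤ f n := fun n => by positivity
  have hfsum : Summable f := Summable.of_nonneg_of_le hf0 hfg hgsum
  refine ⟨hfsum, ?_⟩
  have hS : ∑' n : ℕ, 1/(1+((n:ℝ)+1-x)^2) ≤ 2 * ∑' k : ℕ, 1/(1+(k:ℝ)^2) :=
    tsum_le_of_sum_range_le (fun n => by positivity) (fun N => aux_partial x hz N)
  calc ∑' n, f n ≤ ∑' n, g n := Summable.tsum_le_tsum hfg hfsum hgsum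
    _ = 5*(∑' n : ℕ, ‖r n‖^2) + 8*(∑' n : ℕ, 1/(1+((n:ℝ)+1-x)^2)) := by
        rw [hgdef, Summable.tsum_add (hr.mul_left 5) (hg2sum.mul_left 8), tsum_mul_left, tsum_mul_left]
    _ ≤ 5 * (∑' n : ℕ, ‖r n‖^2) + 16 * (∑' k : ℕ, 1/(1+(k:ℝ)^2)) := by linarith
end
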